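/- arXiv:2104.12450 — 10 statements merged into one kernel-verified Lean document; each statement's English description precedes it below -/
import Mathlib

section
/- Under the hypotheses of the metric amalgamation construction (clopen partition {B_i}, basepoints p_i ∈ B_i, metrics e_i on B_i, amalgamated metric D), if in addition for every i one has diam_d(B_i) ≤ ε and diam_{e_i}(B_i) ≤ ε, then sup_{x,y∈X} |D(x,y) − d(x,y)| ≤ 4ε. -/
open Set Topology

/-- `d` is a metric (as a two-variable real function) on the whole type `X`. -/
def IsMetricOn {X : Type*} (d : X → X → ℝ) : Prop :=
  (∀ x y, d x y = 0 ↔ x = y) ∧ (∀ x y, d x y = d y x) ∧ ∀ x y z, d x y ≤ d x z + d z y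

/-- The metric topology of `d` coincides with the given topology on `X`. -/
def GeneratesTopology {X : Type*} [TopologicalSpace X] (d : X → X → ℝ) : Prop :=
  ∀ s : Set X, IsOpen s ↔ ∀ x ∈ s, ∃ ε > 0, ∀ y, d x y < ε → y ∈ s

/-- `d` is a metric on the subset `A` of `X`. -/
def IsMetricOnSet {X : Type*} (A : Set X) (d : X → X → ℝ) : Prop :=
  (∀ x ∈ A, ∀ y ∈ A, (d x y = 0 ↔ x = y)) ∧ (∀ x ∈ A, ∀ y ∈ A, d x y = d y x) ∧
    ∀ x ∈ A, ∀ y ∈ A, ∀ z ∈ A, d x y ≤ d x z + d z y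

/-- If every block has `d`-diameter and `e i`-diameter at most `ε`, then the
amalgamated metric `D` is uniformly `4ε`-close to `d`. -/
theorem metric_amalgamation_close {X : Type*} [TopologicalSpace X] {I : Type*}
    (d : X → X → ℝ) (hd : IsMetricOn d)
    (B : I → Set X) (hBclopen : ∀ i, IsClopen (B i))
    (hdisj : ∀ i j, i ≠ j → Disjoint (B i) (B j)) (hcover : ⋃ i, B i = univ)
    (p : I → X) (hp : ∀ i, p i ∈ B i)
    (e : I → (X → X → ℝ)) (he : ∀ i, IsMetricOnSet (B i) (e i))
    (ι : X → I) (hι : ∀ x, x ∈ B (ι x))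
    (D : X → X → ℝ)
    (hDeq : ∀ x y, ι x = ι y → D x y = e (ι x) x y)
    (hDne : ∀ x y, ι x ≠ ι y →
      D x y = e (ι x) x (p (ι x)) + d (p (ι x)) (p (ι y)) + e (ι y) (p (ι y)) y)
    (ε : ℝ)
    (hdiamd : ∀ i, ∀ x ∈ B i, ∀ y ∈ B i, d x y ≤ ε)
    (hdiame : ∀ i, ∀ x ∈ B i, ∀ y ∈ B i, e i x y ≤ ε) :
    ∀ x y, |D x y - d x y| ≤ 4 * ε := by
  obtain ⟨hd0, hdsymm, hdtri⟩ := hd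
  have hdnn : ∀ x y, 0 ≤ d x y := by
    intro x y
    have h := hdtri x x y
    rw [(hd0 x x).mpr rfl, hdsymm y x] at h
    linarith
  have henn : ∀ i, ∀ x ∈ B i, ∀ y ∈ B i, 0 ≤ e i x y := by
    intro i x hx y hy
    obtain ⟨h0, hs, ht⟩ := he i
    have h := ht x hx x hx y hy
    rw [(h0 x hx x hx).mpr rfl, hs y hy x hx] at h
    linarith
  intro x y
  have hε : 0 ≤ ε := by
    have := hdiamd (ι x) x (hι x) x (hι x)
    rw [(hd0 x x).mpr rfl] at this
    linarith
  by_cases hij : ι x = ι y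
  · have hy : y ∈ B (ι x) := hij ▸ hι y
    rw [hDeq x y hij]
    have h1 : e (ι x) x y ≤ ε := hdiame (ι x) x (hι x) y hy
    have h2 : d x y ≤ ε := hdiamd (ι x) x (hι x) y hy
    have h3 : 0 ≤ e (ι x) x y := henn (ι x) x (hι x) y hy
    have h4 : 0 ≤ d x y := hdnn x y
    rw [abs_le]; constructor <;> linarith
  · rw [hDne x y hij]
    set i := ι x; set j := ι y
    have hex : e i x (p i) ≤ ε := hdiame i x (hι x) (p i) (hp i)
    have hey : e j (p j) y ≤ ε := hdiame j (p j) (hp j) y (hι y)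
    have hex0 : 0 ≤ e i x (p i) := henn i x (hι x) (p i) (hp i)
    have hey0 : 0 ≤ e j (p j) y := henn j (p j) (hp j) y (hι y)
    have hdx : d (p i) x ≤ ε := hdiamd i (p i) (hp i) x (hι x)
    have hdy : d y (p j) ≤ ε := hdiamd j y (hι y) (p j) (hp j)
    have hdx' : d x (p i) ≤ ε := by rw [hdsymm]; exact hdx
    have hdy' : d (p j) y ≤ ε := by rw [hdsymm]; exact hdy
    -- d p q ≤ d p x + d x y + d y q
    have t1 : d (p i) (p j) ≤ d (p i) x + (d x y + d y (p j)) :=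
      le_trans (hdtri (p i) (p j) x) (by linarith [hdtri x (p j) y])
    have t2 : d x y ≤ d x (p i) + (d (p i) (p j) + d (p j) y) :=
      le_trans (hdtri x y (p i)) (by linarith [hdtri (p i) y (p j)])
    rw [abs_le]; constructor <;> linarith
end

section
/- Let S ⊆ [0,∞) with 0 ∈ S, let (X, d) be an S-valued ultrametric space, let {B_i}_{i∈I} be a clopen partition of X with basepoints p_i ∈ B_i, and let e_i be an S-valued ultrametric on B_i generating the subspace topology. Define D(x,y) = e_i(x,y) if x,y ∈ B_i, and D(x,y) = max(e_i(x,p_i), d(p_i,p_j), e_j(p_j,y)) if x ∈ B_i, y ∈ B_j with i ≠ j. Then D is an S-valued ultrametric on X generating the topology of X, and D|_{B_i × B_i} = e_i for all i. Moreover, if diam_d(B_i) ≤ ε and diam_{e_i}(B_i) ≤ ε for all i, then for all x,y: D(x,y) ≤ max(d(x,y), ε) and d(x,y) ≤ max(D(x,y), ε). -/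
open Set Topology

/-- `d` is an ultrametric on the whole type `X`. -/
def IsUltrametricOn {X : Type*} (d : X → X → ℝ) : Prop :=
  (∀ x y, d x y = 0 ↔ x = y) ∧ (∀ x y, d x y = d y x) ∧
    ∀ x y z, d x y ≤ max (d x z) (d z y)

/-- `d` is an ultrametric on the subset `A` of `X`. -/
def IsUltrametricOnSet {X : Type*} (A : Set X) (d : X → X → ℝ) : Prop :=
  (∀ x ∈ A, ∀ y ∈ A, (d x y = 0 ↔ x = y)) ∧ (∀ x ∈ A, ∀ y ∈ A, d x y = d y x) ∧
    ∀ x ∈ A, ∀ y ∈ A, ∀ z ∈ A, d x y ≤ max (d x z) (d z y)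

/-- The metric topology of `d` on `A` coincides with the subspace topology of `A`. -/
def GeneratesSubspaceTopology {X : Type*} [TopologicalSpace X] (A : Set X)
    (d : X → X → ℝ) : Prop :=
  ∀ s : Set X, s ⊆ A →
    ((∃ t, IsOpen t ∧ s = t ∩ A) ↔ ∀ x ∈ s, ∃ ε > 0, ∀ y ∈ A, d x y < ε → y ∈ s)


lemma max_rot (a b c : ℝ) : max a (max b c) = max c (max b a) := by
  rw [max_left_comm, max_comm a c, max_left_comm]

/-- Amalgamation of `S`-valued ultrametrics along a clopen partition. -/
theorem ultrametric_amalgamation {X : Type*} [TopologicalSpace X] {I : Type*}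
    (S : Set ℝ) (hS : S ⊆ Set.Ici 0) (hS0 : (0 : ℝ) ∈ S)
    (d : X → X → ℝ) (hd : IsUltrametricOn d) (hdS : ∀ x y, d x y ∈ S)
    (hdtop : GeneratesTopology d)
    (B : I → Set X) (hBclopen : ∀ i, IsClopen (B i))
    (hdisj : ∀ i j, i ≠ j → Disjoint (B i) (B j)) (hcover : ⋃ i, B i = univ)
    (p : I → X) (hp : ∀ i, p i ∈ B i)
    (e : I → (X → X → ℝ)) (he : ∀ i, IsUltrametricOnSet (B i) (e i))
    (heS : ∀ i, ∀ x ∈ B i, ∀ y ∈ B i, e i x y ∈ S)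
    (hetop : ∀ i, GeneratesSubspaceTopology (B i) (e i))
    (ι : X → I) (hι : ∀ x, x ∈ B (ι x))
    (D : X → X → ℝ)
    (hDeq : ∀ x y, ι x = ι y → D x y = e (ι x) x y)
    (hDne : ∀ x y, ι x ≠ ι y →
      D x y = max (e (ι x) x (p (ι x)))
        (max (d (p (ι x)) (p (ι y))) (e (ι y) (p (ι y)) y))) :
    IsUltrametricOn D ∧ (∀ x y, D x y ∈ S) ∧ GeneratesTopology D ∧
      (∀ i, ∀ x ∈ B i, ∀ y ∈ B i, D x y = e i x y) ∧
      ∀ ε : ℝ, (∀ i, ∀ x ∈ B i, ∀ y ∈ B i, d x y ≤ ε) →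
        (∀ i, ∀ x ∈ B i, ∀ y ∈ B i, e i x y ≤ ε) →
        ∀ x y, D x y ≤ max (d x y) ε ∧ d x y ≤ max (D x y) ε := by

  obtain ⟨hd0, hdsymm, hdtri⟩ := hd
  have hιeq : ∀ i, ∀ x ∈ B i, ι x = i := by
    intro i x hx
    by_contra h
    exact (hdisj _ _ h).ne_of_mem (hι x) hx rfl
  have hdnn : ∀ x y, 0 ≤ d x y := fun x y => hS (hdS x y)
  have henn : ∀ i, ∀ x ∈ B i, ∀ y ∈ B i, 0 ≤ e i x y :=
    fun i x hx y hy => hS (heS i x hx y hy)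
  have hmem : ∀ x y, ι x = ι y → y ∈ B (ι x) := fun x y h => by rw [h]; exact hι y
  have hppos : ∀ i j, i ≠ j → 0 < d (p i) (p j) := by
    intro i j hij
    refine lt_of_le_of_ne (hdnn _ _) (Ne.symm fun hc => ?_)
    exact (hdisj i j hij).ne_of_mem (hp i) (hp j) ((hd0 _ _).1 hc)
  have hDres : ∀ i, ∀ x ∈ B i, ∀ y ∈ B i, D x y = e i x y := by
    intro i x hx y hy
    have hx' := hιeq i x hx
    have hy' := hιeq i y hy
    rw [hDeq x y (hx'.trans hy'.symm), hx']
  have hmaxS : ∀ a ∈ S, ∀ b ∈ S, max a b ∈ S := by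
    intro a ha b hb
    rcases max_choice a b with h | h <;> rw [h] <;> assumption
  have hDS : ∀ x y, D x y ∈ S := by
    intro x y
    by_cases h : ι x = ι y
    · rw [hDeq x y h]
      exact heS _ x (hι x) y (hmem x y h)
    · rw [hDne x y h]
      exact hmaxS _ (heS _ x (hι x) _ (hp _)) _
        (hmaxS _ (hdS _ _) _ (heS _ _ (hp _) y (hι y)))
  have hD0 : ∀ x y, D x y = 0 ↔ x = y := by
    intro x y
    by_cases h : ι x = ι y
    · rw [hDeq x y h]
      exact (he (ι x)).1 x (hι x) y (hmem x y h)
    · constructor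
      · intro h0
        exfalso
        have hle : d (p (ι x)) (p (ι y)) ≤ D x y := by
          rw [hDne x y h]
          exact le_max_of_le_right (le_max_left _ _)
        have := hppos (ι x) (ι y) h
        linarith
      · intro h0
        exact absurd (congrArg ι h0) h
  have hDsymm : ∀ x y, D x y = D y x := by
    intro x y
    by_cases h : ι x = ι y
    · rw [hDeq x y h, hDeq y x h.symm, ← h]
      exact (he (ι x)).2.1 x (hι x) y (hmem x y h)
    · rw [hDne x y h, hDne y x (Ne.symm h),
        (he (ι x)).2.1 x (hι x) (p (ι x)) (hp _),
        (he (ι y)).2.1 (p (ι y)) (hp _) y (hι y),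
        hdsymm (p (ι x)) (p (ι y)), max_rot]
  have hDtri : ∀ x y z, D x y ≤ max (D x z) (D z y) := by
    intro x y z
    by_cases hxy : ι x = ι y
    · by_cases hxz : ι x = ι z
      · rw [hDeq x y hxy, hDeq x z hxz, hDeq z y (hxz.symm.trans hxy), ← hxz]
        exact (he (ι x)).2.2 x (hι x) y (hmem x y hxy) z (hmem x z hxz)
      · have hzy : ι z ≠ ι y := fun hc => hxz (hxy.trans hc.symm)
        rw [hDeq x y hxy, hDne x z hxz, hDne z y hzy, ← hxy]
        calc e (ι x) x y ≤ max (e (ι x) x (p (ι x))) (e (ι x) (p (ι x)) y) :=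
              (he (ι x)).2.2 x (hι x) y (hmem x y hxy) (p (ι x)) (hp _)
          _ ≤ _ := max_le_max (le_max_left _ _)
              (le_max_of_le_right (le_max_right _ _))
    · by_cases hxz : ι x = ι z
      · have hzy : ι z ≠ ι y := fun hc => hxy (hxz.trans hc)
        rw [hDne x y hxy, hDeq x z hxz, hDne z y hzy, ← hxz]
        apply max_le
        · calc e (ι x) x (p (ι x))
              ≤ max (e (ι x) x z) (e (ι x) z (p (ι x))) :=
                (he (ι x)).2.2 x (hι x) (p (ι x)) (hp _) z (hmem x z hxz)
            _ ≤ _ := max_le_max le_rfl (le_max_left _ _)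
        · exact le_max_of_le_right (le_max_right _ _)
      · by_cases hzy : ι z = ι y
        · rw [hDne x y hxy, hDne x z (fun hc => hxz hc), hDeq z y hzy, hzy]
          apply max_le
          · exact le_max_of_le_left (le_max_left _ _)
          apply max_le
          · exact le_max_of_le_left (le_max_of_le_right (le_max_left _ _))
          · have h3 : e (ι y) (p (ι y)) y
                ≤ max (e (ι y) (p (ι y)) z) (e (ι y) z y) :=
              (he (ι y)).2.2 (p (ι y)) (hp _) y (hι y) z
                (by rw [← hzy]; exact hι z)
            refine le_trans h3 (max_le ?_ (le_max_right _ _))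
            exact le_max_of_le_left (le_max_of_le_right (le_max_right _ _))
        · rw [hDne x y hxy, hDne x z hxz, hDne z y hzy]
          apply max_le
          · exact le_max_of_le_left (le_max_left _ _)
          apply max_le
          · calc d (p (ι x)) (p (ι y))
                ≤ max (d (p (ι x)) (p (ι z))) (d (p (ι z)) (p (ι y))) :=
                  hdtri _ _ _
              _ ≤ _ := max_le_max (le_max_of_le_right (le_max_left _ _))
                  (le_max_of_le_right (le_max_left _ _))
          · exact le_max_of_le_right (le_max_of_le_right (le_max_right _ _))
  refine ⟨⟨hD0, hDsymm, hDtri⟩, hDS, ?_, hDres, ?_⟩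
  · -- GeneratesTopology D
    intro s
    constructor
    · intro hs x hx
      have hx' : x ∈ s ∩ B (ι x) := ⟨hx, hι x⟩
      obtain ⟨ε1, hε1, hball⟩ :=
        (hetop (ι x) (s ∩ B (ι x)) inter_subset_right).1 ⟨s, hs, rfl⟩ x hx'
      have hsame : ∀ y, ι x = ι y → D x y < ε1 → y ∈ s := by
        intro y hiy hDy
        have hyB : y ∈ B (ι x) := hmem x y hiy
        have : e (ι x) x y < ε1 := by rw [← hDeq x y hiy]; exact hDy
        exact (hball y hyB this).1
      by_cases hxp : x = p (ι x)
      · obtain ⟨ε2, hε2, hball2⟩ := (hdtop (B (ι x))).1 (hBclopen (ι x)).2 x (hι x)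
        refine ⟨min ε1 ε2, lt_min hε1 hε2, ?_⟩
        intro y hy
        by_cases hiy : ι x = ι y
        · exact hsame y hiy (lt_of_lt_of_le hy (min_le_left _ _))
        · exfalso
          have hd1 : d (p (ι x)) (p (ι y)) ≤ D x y := by
            rw [hDne x y hiy]
            exact le_max_of_le_right (le_max_left _ _)
          have hpj : p (ι y) ∉ B (ι x) := fun hc =>
            (hdisj (ι x) (ι y) hiy).ne_of_mem hc (hp (ι y)) rfl
          have : ¬ d x (p (ι y)) < ε2 := fun hc => hpj (hball2 _ hc)
          rw [← hxp] at hd1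
          have h2 : D x y < ε2 := lt_of_lt_of_le hy (min_le_right _ _)
          exact this (lt_of_le_of_lt hd1 h2)
      · have hδ : 0 < e (ι x) x (p (ι x)) := by
          refine lt_of_le_of_ne (henn _ x (hι x) _ (hp _)) (Ne.symm fun hc => ?_)
          exact hxp (((he (ι x)).1 x (hι x) (p (ι x)) (hp _)).1 hc)
        refine ⟨min ε1 (e (ι x) x (p (ι x))), lt_min hε1 hδ, ?_⟩
        intro y hy
        by_cases hiy : ι x = ι y
        · exact hsame y hiy (lt_of_lt_of_le hy (min_le_left _ _))
        · exfalso
          have hd1 : e (ι x) x (p (ι x)) ≤ D x y := by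
            rw [hDne x y hiy]; exact le_max_left _ _
          have h2 : D x y < e (ι x) x (p (ι x)) :=
            lt_of_lt_of_le hy (min_le_right _ _)
          linarith
    · intro hs
      apply (hdtop s).2
      intro x hx
      have hsub : s ∩ B (ι x) ⊆ B (ι x) := inter_subset_right
      have hcond : ∀ z ∈ s ∩ B (ι x), ∃ ε > 0, ∀ y ∈ B (ι x),
          e (ι x) z y < ε → y ∈ s ∩ B (ι x) := by
        intro z hz
        obtain ⟨ε, hε, hball⟩ := hs z hz.1
        refine ⟨ε, hε, fun y hy hey => ⟨hball y ?_, hy⟩⟩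
        have hzi : ι z = ι x := hιeq (ι x) z hz.2
        have hyi : ι y = ι x := hιeq (ι x) y hy
        rw [hDeq z y (hzi.trans hyi.symm), hzi]
        exact hey
      obtain ⟨t, ht, hts⟩ := (hetop (ι x) _ hsub).2 hcond
      obtain ⟨ε, hε, hball⟩ := (hdtop (t ∩ B (ι x))).1
        (ht.inter (hBclopen (ι x)).2) x (by rw [← hts]; exact ⟨hx, hι x⟩)
      refine ⟨ε, hε, fun y hdy => ?_⟩
      have : y ∈ s ∩ B (ι x) := by rw [hts]; exact hball y hdy
      exact this.1
  · -- quantitative part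
    intro ε hdε heε x y
    by_cases h : ι x = ι y
    · have hyB := hmem x y h
      constructor
      · rw [hDeq x y h]
        exact le_max_of_le_right (heε (ι x) x (hι x) y hyB)
      · exact le_max_of_le_right (hdε (ι x) x (hι x) y hyB)
    · have hA : e (ι x) x (p (ι x)) ≤ ε := heε _ x (hι x) _ (hp _)
      have hC : e (ι y) (p (ι y)) y ≤ ε := heε _ _ (hp _) y (hι y)
      have h1 : d (p (ι x)) x ≤ ε := hdε _ _ (hp _) x (hι x)
      have h2 : d y (p (ι y)) ≤ ε := hdε _ y (hι y) _ (hp _)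
      constructor
      · rw [hDne x y h]
        have hb : d (p (ι x)) (p (ι y)) ≤ max (d x y) ε := by
          calc d (p (ι x)) (p (ι y))
              ≤ max (d (p (ι x)) x) (d x (p (ι y))) := hdtri _ _ _
            _ ≤ max (d (p (ι x)) x) (max (d x y) (d y (p (ι y)))) :=
                max_le_max le_rfl (hdtri _ _ _)
            _ ≤ max (d x y) ε := max_le (le_max_of_le_right h1)
                (max_le (le_max_left _ _) (le_max_of_le_right h2))
        exact max_le (le_max_of_le_right hA) (max_le hb (le_max_of_le_right hC))
      · have hb : d (p (ι x)) (p (ι y)) ≤ D x y := by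
          rw [hDne x y h]
          exact le_max_of_le_right (le_max_left _ _)
        calc d x y ≤ max (d x (p (ι x))) (d (p (ι x)) y) := hdtri _ _ _
          _ ≤ max (d x (p (ι x))) (max (d (p (ι x)) (p (ι y))) (d (p (ι y)) y)) :=
              max_le_max le_rfl (hdtri _ _ _)
          _ ≤ max (D x y) ε := by
              apply max_le
              · rw [hdsymm] at h1; exact le_max_of_le_right h1
              apply max_le
              · exact le_max_of_le_left hb
              · rw [← hdsymm] at h2; exact le_max_of_le_right h2
end

section
/- Let (X, D) be the amalgamation of a metric d along a finite clopen partition {B_i}_{i=1}^n with metrics e_i on B_i, where each B_i has at least two points. If every (B_i, e_i) is doubling, then (X, D) is doubling. -/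
open Set Topology

/-- Diameter of a finite set with respect to the distance function `d`. -/
noncomputable def finsetDiam {X : Type*} (d : X → X → ℝ) (A : Finset X) : ℝ :=
  sSup {r : ℝ | ∃ x ∈ A, ∃ y ∈ A, d x y = r}

/-- Minimal positive distance `α_d(A)` of a finite set `A`. -/
noncomputable def finsetAlpha {X : Type*} (d : X → X → ℝ) (A : Finset X) : ℝ :=
  sInf {r : ℝ | ∃ x ∈ A, ∃ y ∈ A, x ≠ y ∧ d x y = r}

/-- `d` is doubling on the subset `A`: there are `C ≥ 1` and `β > 0` such that every
finite subset `F` of `A` with at least two points satisfies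
`card F ≤ C (diam_d F / α_d F)^β`. -/
def DoublingOn {X : Type*} (A : Set X) (d : X → X → ℝ) : Prop :=
  ∃ C : ℝ, 1 ≤ C ∧ ∃ β : ℝ, 0 < β ∧ ∀ F : Finset X, ↑F ⊆ A → 2 ≤ F.card →
    (F.card : ℝ) ≤ C * (finsetDiam d F / finsetAlpha d F) ^ β

section helpers
variable {X : Type*} {d : X → X → ℝ} {F : Finset X}

lemma diamSet_finite (d : X → X → ℝ) (F : Finset X) :
    {r : ℝ | ∃ x ∈ F, ∃ y ∈ F, d x y = r}.Finite := by
  have h : {r : ℝ | ∃ x ∈ F, ∃ y ∈ F, d x y = r}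
      = ↑((F ×ˢ F).image fun q => d q.1 q.2) := by
    ext r
    simp only [Finset.coe_image, Set.mem_image, Finset.mem_coe, Finset.mem_product,
      Set.mem_setOf_eq, Prod.exists]
    constructor
    · rintro ⟨x, hx, y, hy, rfl⟩; exact ⟨x, y, ⟨hx, hy⟩, rfl⟩
    · rintro ⟨x, y, ⟨hx, hy⟩, rfl⟩; exact ⟨x, hx, y, hy, rfl⟩
  rw [h]; exact Finset.finite_toSet _

lemma alphaSet_finite (d : X → X → ℝ) (F : Finset X) :
    {r : ℝ | ∃ x ∈ F, ∃ y ∈ F, x ≠ y ∧ d x y = r}.Finite := by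
  refine (diamSet_finite d F).subset ?_
  rintro r ⟨x, hx, y, hy, _, rfl⟩; exact ⟨x, hx, y, hy, rfl⟩

lemma le_finsetDiam {x y : X} (hx : x ∈ F) (hy : y ∈ F) : d x y ≤ finsetDiam d F :=
  le_csSup (diamSet_finite d F).bddAbove ⟨x, hx, y, hy, rfl⟩

lemma finsetDiam_le {M : ℝ} (hne : F.Nonempty)
    (h : ∀ x ∈ F, ∀ y ∈ F, d x y ≤ M) : finsetDiam d F ≤ M := by
  apply csSup_le
  · obtain ⟨x, hx⟩ := hne; exact ⟨d x x, x, hx, x, hx, rfl⟩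
  · rintro r ⟨x, hx, y, hy, rfl⟩; exact h x hx y hy

lemma finsetAlpha_le {x y : X} (hx : x ∈ F) (hy : y ∈ F) (hxy : x ≠ y) :
    finsetAlpha d F ≤ d x y :=
  csInf_le (alphaSet_finite d F).bddBelow ⟨x, hx, y, hy, hxy, rfl⟩

lemma finsetAlpha_mem (h : ∃ x ∈ F, ∃ y ∈ F, x ≠ y) :
    ∃ x ∈ F, ∃ y ∈ F, x ≠ y ∧ d x y = finsetAlpha d F := by
  obtain ⟨x, hx, y, hy, hxy⟩ := h
  have hne : {r : ℝ | ∃ x ∈ F, ∃ y ∈ F, x ≠ y ∧ d x y = r}.Nonempty :=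
    ⟨d x y, x, hx, y, hy, hxy, rfl⟩
  exact Set.Nonempty.csInf_mem hne (alphaSet_finite d F)

lemma IsMetricOnSet.nonneg' {A : Set X} (h : IsMetricOnSet A d) {x y : X}
    (hx : x ∈ A) (hy : y ∈ A) : 0 ≤ d x y := by
  have h1 : d x x = 0 := (h.1 x hx x hx).mpr rfl
  have h2 : d y x = d x y := h.2.1 y hy x hx
  have h3 := h.2.2 x hx x hx y hy
  linarith

lemma IsMetricOnSet.pos' {A : Set X} (h : IsMetricOnSet A d) {x y : X}
    (hx : x ∈ A) (hy : y ∈ A) (hxy : x ≠ y) : 0 < d x y := by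
  rcases lt_or_eq_of_le (h.nonneg' hx hy) with h' | h'
  · exact h'
  · exact absurd ((h.1 x hx y hy).mp h'.symm) hxy

lemma IsMetricOn.nonneg' (h : IsMetricOn d) (x y : X) : 0 ≤ d x y := by
  have h1 : d x x = 0 := (h.1 x x).mpr rfl
  have h2 : d y x = d x y := h.2.1 y x
  have h3 := h.2.2 x x y
  linarith

lemma IsMetricOn.pos' (h : IsMetricOn d) {x y : X} (hxy : x ≠ y) : 0 < d x y := by
  rcases lt_or_eq_of_le (h.nonneg' x y) with h' | h'
  · exact h'
  · exact absurd ((h.1 x y).mp h'.symm) hxy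

end helpers

/-- If every block of a finite amalgamation is doubling, so is the amalgam. -/
theorem amalgamation_doubling {X : Type*} [TopologicalSpace X] {n : ℕ}
    (d : X → X → ℝ) (hd : IsMetricOn d)
    (B : Fin n → Set X) (hBclopen : ∀ i, IsClopen (B i))
    (htwo : ∀ i, ∃ x ∈ B i, ∃ y ∈ B i, x ≠ y)
    (hdisj : ∀ i j, i ≠ j → Disjoint (B i) (B j)) (hcover : ⋃ i, B i = univ)
    (p : Fin n → X) (hp : ∀ i, p i ∈ B i)
    (e : Fin n → (X → X → ℝ)) (he : ∀ i, IsMetricOnSet (B i) (e i))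
    (ι : X → Fin n) (hι : ∀ x, x ∈ B (ι x))
    (D : X → X → ℝ)
    (hDeq : ∀ x y, ι x = ι y → D x y = e (ι x) x y)
    (hDne : ∀ x y, ι x ≠ ι y →
      D x y = e (ι x) x (p (ι x)) + d (p (ι x)) (p (ι y)) + e (ι y) (p (ι y)) y)
    (hdbl : ∀ i, DoublingOn (B i) (e i)) :
    DoublingOn (Set.univ : Set X) D := by
  classical
  choose Ci hCi1 βi hβipos hblk using hdbl
  set C0 : ℕ := max 1 (Finset.univ.sup fun i => ⌈Ci i⌉₊) with hC0
  set β0 : ℕ := max 1 (Finset.univ.sup fun i => ⌈βi i⌉₊) with hβ0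
  have hC0one : (1 : ℝ) ≤ (C0 : ℝ) := by
    exact_mod_cast Nat.one_le_cast.mpr (le_max_left _ _)
  have hβ0one : (1 : ℝ) ≤ (β0 : ℝ) := by
    exact_mod_cast Nat.one_le_cast.mpr (le_max_left _ _)
  have hCile : ∀ i, Ci i ≤ (C0 : ℝ) := by
    intro i
    calc Ci i ≤ (⌈Ci i⌉₊ : ℝ) := Nat.le_ceil _
      _ ≤ (C0 : ℝ) := by
        have : ⌈Ci i⌉₊ ≤ C0 := by
          rw [hC0]; exact le_trans (Finset.le_sup (f := fun i => ⌈Ci i⌉₊) (Finset.mem_univ i)) (le_max_right 1 _)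
        exact_mod_cast this
  have hβile : ∀ i, βi i ≤ (β0 : ℝ) := by
    intro i
    calc βi i ≤ (⌈βi i⌉₊ : ℝ) := Nat.le_ceil _
      _ ≤ (β0 : ℝ) := by
        have : ⌈βi i⌉₊ ≤ β0 := by
          rw [hβ0]; exact le_trans (Finset.le_sup (f := fun i => ⌈βi i⌉₊) (Finset.mem_univ i)) (le_max_right 1 _)
        exact_mod_cast this
  refine ⟨2 * n * C0 + 1, ?_, (β0 : ℝ), by linarith, ?_⟩
  · have hnn : (0 : ℝ) ≤ 2 * n * C0 := by positivity
    linarith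
  intro F _ hcard
  -- D is positive on distinct points
  have hDpos : ∀ x y : X, x ≠ y → 0 < D x y := by
    intro x y hxy
    by_cases hι' : ι x = ι y
    · rw [hDeq x y hι']
      have hyB : y ∈ B (ι x) := hι' ▸ hι y
      exact (he (ι x)).pos' (hι x) hyB hxy
    · rw [hDne x y hι']
      have h1 := (he (ι x)).nonneg' (hι x) (hp (ι x))
      have h2 := (he (ι y)).nonneg' (hp (ι y)) (hι y)
      have hpne : p (ι x) ≠ p (ι y) := by
        intro hpe
        exact Set.disjoint_left.mp (hdisj _ _ hι') (hp (ι x)) (hpe ▸ hp (ι y))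
      have h3 := hd.pos' hpne
      linarith
  have hpair : ∃ x ∈ F, ∃ y ∈ F, x ≠ y := Finset.one_lt_card.mp hcard
  obtain ⟨a, ha, b, hb, hab, haval⟩ := finsetAlpha_mem (d := D) hpair
  have hαpos : 0 < finsetAlpha D F := haval ▸ hDpos a b hab
  have hαdiam : finsetAlpha D F ≤ finsetDiam D F := haval ▸ le_finsetDiam ha hb
  set R : ℝ := finsetDiam D F / finsetAlpha D F with hR
  have hR1 : 1 ≤ R := (one_le_div hαpos).mpr hαdiam
  have hRβ1 : 1 ≤ R ^ (β0 : ℝ) := by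
    calc (1 : ℝ) = 1 ^ (β0 : ℝ) := (Real.one_rpow _).symm
      _ ≤ R ^ (β0 : ℝ) := Real.rpow_le_rpow zero_le_one hR1 (by linarith)
  -- per-block bound
  have key : ∀ i : Fin n, ((F.filter fun x => ι x = i).card : ℝ)
      ≤ (C0 : ℝ) * R ^ (β0 : ℝ) + 1 := by
    intro i
    set G : Finset X := F.filter fun x => ι x = i with hG
    have hGsub : ↑G ⊆ B i := by
      intro x hx
      obtain ⟨_, hxi⟩ := Finset.mem_filter.mp hx
      exact hxi ▸ hι x
    have hGF : ∀ x ∈ G, x ∈ F := fun x hx => (Finset.mem_filter.mp hx).1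
    have hGι : ∀ x ∈ G, ι x = i := fun x hx => (Finset.mem_filter.mp hx).2
    have hDG : ∀ x ∈ G, ∀ y ∈ G, e i x y = D x y := by
      intro x hx y hy
      have hxy : ι x = ι y := (hGι x hx).trans (hGι y hy).symm
      rw [hDeq x y hxy, hGι x hx]
    by_cases h2 : 2 ≤ G.card
    · have hGpair : ∃ x ∈ G, ∃ y ∈ G, x ≠ y := Finset.one_lt_card.mp h2
      obtain ⟨u, hu, v, hv, huv, huval⟩ := finsetAlpha_mem (d := e i) hGpair
      have hαG : finsetAlpha D F ≤ finsetAlpha (e i) G := by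
        rw [← huval, hDG u hu v hv]
        exact finsetAlpha_le (hGF u hu) (hGF v hv) huv
      have hαGpos : 0 < finsetAlpha (e i) G := lt_of_lt_of_le hαpos hαG
      have hdiamG : finsetDiam (e i) G ≤ finsetDiam D F := by
        apply finsetDiam_le ⟨u, hu⟩
        intro x hx y hy
        rw [hDG x hx y hy]
        exact le_finsetDiam (hGF x hx) (hGF y hy)
      have hratio : finsetDiam (e i) G / finsetAlpha (e i) G ≤ R := by
        exact div_le_div₀ (le_trans hαpos.le hαdiam) hdiamG hαpos hαG
      have hratio0 : 0 ≤ finsetDiam (e i) G / finsetAlpha (e i) G := by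
        apply div_nonneg _ hαGpos.le
        have : e i u u = 0 := ((he i).1 u (hGsub hu) u (hGsub hu)).mpr rfl
        calc (0 : ℝ) = e i u u := this.symm
          _ ≤ finsetDiam (e i) G := le_finsetDiam hu hu
      calc ((G.card : ℝ))
          ≤ Ci i * (finsetDiam (e i) G / finsetAlpha (e i) G) ^ βi i :=
            hblk i G hGsub h2
        _ ≤ (C0 : ℝ) * (R ^ (β0 : ℝ)) := by
            apply mul_le_mul (hCile i) _ (Real.rpow_nonneg hratio0 _) (by linarith)
            calc (finsetDiam (e i) G / finsetAlpha (e i) G) ^ βi i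
                ≤ R ^ βi i := Real.rpow_le_rpow hratio0 hratio (hβipos i).le
              _ ≤ R ^ (β0 : ℝ) := Real.rpow_le_rpow_of_exponent_le hR1 (hβile i)
        _ ≤ (C0 : ℝ) * R ^ (β0 : ℝ) + 1 := by linarith
    · have : G.card ≤ 1 := by omega
      have hC0R : 0 ≤ (C0 : ℝ) * R ^ (β0 : ℝ) := by positivity
      have : ((G.card : ℝ)) ≤ 1 := by exact_mod_cast this
      linarith
  have hsum : F.card = ∑ i : Fin n, (F.filter fun x => ι x = i).card :=
    Finset.card_eq_sum_card_fiberwise (fun x _ => Finset.mem_univ (ι x))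
  have hle : (F.card : ℝ) ≤ (n : ℝ) * ((C0 : ℝ) * R ^ (β0 : ℝ) + 1) := by
    rw [hsum]
    push_cast
    calc (∑ i : Fin n, ((F.filter fun x => ι x = i).card : ℝ))
        ≤ ∑ _i : Fin n, ((C0 : ℝ) * R ^ (β0 : ℝ) + 1) :=
          Finset.sum_le_sum (fun i _ => key i)
      _ = (n : ℝ) * ((C0 : ℝ) * R ^ (β0 : ℝ) + 1) := by
          rw [Finset.sum_const, Finset.card_univ, Fintype.card_fin, nsmul_eq_mul]
  have hn0 : (0 : ℝ) ≤ (n : ℝ) := Nat.cast_nonneg n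
  nlinarith [mul_le_mul_of_nonneg_left hRβ1 (mul_nonneg hn0 (by linarith : (0:ℝ) ≤ (C0:ℝ))),
    mul_le_mul_of_nonneg_left hRβ1 hn0,
    mul_le_mul_of_nonneg_left hC0one hn0]
end

section
/- Let (X, D) be the amalgamation of a metric d along a finite clopen partition {B_i}_{i=1}^n with metrics e_i on B_i, where each B_i has at least two points and X is bounded. If every (B_i, e_i) is uniformly perfect, then (X, D) is uniformly perfect. -/
open Set Topology

/-- Diameter of the set `A` with respect to the distance function `d`. -/
noncomputable def setDiam {X : Type*} (A : Set X) (d : X → X → ℝ) : ℝ :=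
  sSup {r : ℝ | ∃ x ∈ A, ∃ y ∈ A, d x y = r}

/-- `d` is uniformly perfect on `A`: there is `c ∈ (0,1)` such that for every `x ∈ A`
and every `r ∈ (0, diam_d A)` there is `y ∈ A` with `c·r ≤ d(x,y) ≤ r`. -/
def UniformlyPerfectOn {X : Type*} (A : Set X) (d : X → X → ℝ) : Prop :=
  ∃ c : ℝ, 0 < c ∧ c < 1 ∧ ∀ x ∈ A, ∀ r : ℝ, 0 < r → r < setDiam A d →
    ∃ y ∈ A, c * r ≤ d x y ∧ d x y ≤ r

/-- If every block of a finite amalgamation (with blocks having at least two points,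
on a bounded space) is uniformly perfect, so is the amalgam. -/
theorem amalgamation_uniformlyPerfect {X : Type*} [TopologicalSpace X] {n : ℕ}
    (d : X → X → ℝ) (hd : IsMetricOn d)
    (B : Fin n → Set X) (hBclopen : ∀ i, IsClopen (B i))
    (htwo : ∀ i, ∃ x ∈ B i, ∃ y ∈ B i, x ≠ y)
    (hdisj : ∀ i j, i ≠ j → Disjoint (B i) (B j)) (hcover : ⋃ i, B i = univ)
    (p : Fin n → X) (hp : ∀ i, p i ∈ B i)
    (e : Fin n → (X → X → ℝ)) (he : ∀ i, IsMetricOnSet (B i) (e i))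
    (ι : X → Fin n) (hι : ∀ x, x ∈ B (ι x))
    (D : X → X → ℝ)
    (hDeq : ∀ x y, ι x = ι y → D x y = e (ι x) x y)
    (hDne : ∀ x y, ι x ≠ ι y →
      D x y = e (ι x) x (p (ι x)) + d (p (ι x)) (p (ι y)) + e (ι y) (p (ι y)) y)
    (hbdd : ∃ R : ℝ, ∀ x y, D x y ≤ R)
    (hup : ∀ i, UniformlyPerfectOn (B i) (e i)) :
    UniformlyPerfectOn (Set.univ : Set X) D := by
  classical
  obtain ⟨R, hR⟩ := hbdd
  by_cases hX : IsEmpty X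
  · exact ⟨1/2, by norm_num, by norm_num, fun x hx => (hX.false x).elim⟩
  rw [not_isEmpty_iff] at hX
  obtain ⟨x₀⟩ := hX
  have hn : Nonempty (Fin n) := ⟨ι x₀⟩
  choose c hc0 hc1 hcup using hup
  have hιeq : ∀ (i : Fin n) (y : X), y ∈ B i → ι y = i := by
    intro i y hy
    by_contra hne
    exact Set.disjoint_left.mp (hdisj _ _ hne) (hι y) hy
  have hDe : ∀ (i : Fin n), ∀ x ∈ B i, ∀ y ∈ B i, D x y = e i x y := by
    intro i x hx y hy
    have hx' := hιeq i x hx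
    have hy' := hιeq i y hy
    rw [hDeq x y (hx'.trans hy'.symm), hx']
  have hbddΔ : BddAbove {r : ℝ | ∃ x ∈ (univ : Set X), ∃ y ∈ (univ : Set X), D x y = r} :=
    ⟨R, by rintro r ⟨x, -, y, -, rfl⟩; exact hR x y⟩
  have he0 : ∀ i, ∀ x ∈ B i, e i x x = 0 := fun i x hx => ((he i).1 x hx x hx).mpr rfl
  have henn : ∀ i, ∀ x ∈ B i, ∀ y ∈ B i, 0 ≤ e i x y := by
    intro i x hx y hy
    have h1 := (he i).2.2 x hx x hx y hy
    have h2 := (he i).2.1 y hy x hx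
    have h3 := he0 i x hx
    linarith
  have hsubset : ∀ i, {r : ℝ | ∃ x ∈ B i, ∃ y ∈ B i, e i x y = r} ⊆
      {r : ℝ | ∃ x ∈ (univ : Set X), ∃ y ∈ (univ : Set X), D x y = r} := by
    rintro i r ⟨x, hx, y, hy, rfl⟩
    exact ⟨x, trivial, y, trivial, hDe i x hx y hy⟩
  have hδpos : ∀ i, 0 < setDiam (B i) (e i) := by
    intro i
    obtain ⟨a, ha, b, hb, hab⟩ := htwo i
    have hpos : 0 < e i a b :=
      lt_of_le_of_ne (henn i a ha b hb) (fun h => hab (((he i).1 a ha b hb).mp h.symm))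
    refine lt_of_lt_of_le hpos (le_csSup ?_ ⟨a, ha, b, hb, rfl⟩)
    exact BddAbove.mono (hsubset i) hbddΔ
  have hδleΔ : ∀ i, setDiam (B i) (e i) ≤ setDiam (univ : Set X) D := by
    intro i
    obtain ⟨a, ha, b, hb, -⟩ := htwo i
    exact csSup_le_csSup hbddΔ ⟨e i a b, a, ha, b, hb, rfl⟩ (hsubset i)
  set Δ := setDiam (univ : Set X) D with hΔdef
  have hΔpos : 0 < Δ := lt_of_lt_of_le (hδpos (ι x₀)) (hδleΔ (ι x₀))
  have hne : (Finset.univ : Finset (Fin n)).Nonempty := Finset.univ_nonempty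
  set cmin := Finset.univ.inf' hne c with hcmin
  set δmin := Finset.univ.inf' hne (fun i => setDiam (B i) (e i)) with hδmin
  have hcmin0 : 0 < cmin := by
    rw [hcmin, Finset.lt_inf'_iff]
    exact fun i _ => hc0 i
  have hδmin0 : 0 < δmin := by
    rw [hδmin, Finset.lt_inf'_iff]
    exact fun i _ => hδpos i
  have hcminle : ∀ i, cmin ≤ c i := fun i => Finset.inf'_le _ (Finset.mem_univ i)
  have hδminle : ∀ i, δmin ≤ setDiam (B i) (e i) :=
    fun i => Finset.inf'_le _ (Finset.mem_univ i)
  have hδminΔ : δmin ≤ Δ := (hδminle (ι x₀)).trans (hδleΔ (ι x₀))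
  have hcmin1 : cmin < 1 := lt_of_le_of_lt (hcminle (ι x₀)) (hc1 (ι x₀))
  refine ⟨cmin * δmin / (2 * Δ), by positivity, ?_, ?_⟩
  · rw [div_lt_one (by positivity)]
    nlinarith
  · intro x hx r hr0 hrΔ
    set i := ι x with hi
    set δi := setDiam (B i) (e i) with hδi
    set r' := min r (δi / 2) with hr'
    have hδipos : 0 < δi := hδpos i
    have hr'0 : 0 < r' := lt_min hr0 (by linarith)
    have hr'δ : r' < δi := lt_of_le_of_lt (min_le_right _ _) (by linarith)
    obtain ⟨y, hy, h1, h2⟩ := hcup i x (hι x) r' hr'0 hr'δ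
    have hD : D x y = e i x y := hDe i x (hι x) y hy
    have hrΔ' : r ≤ Δ := le_of_lt hrΔ
    have hδiminle : δmin ≤ δi := hδminle i
    refine ⟨y, trivial, ?_, ?_⟩
    · rw [hD]
      refine le_trans ?_ h1
      have h3 : δmin * r / (2 * Δ) ≤ r' := by
        refine le_min ?_ ?_
        · rw [div_le_iff₀ (by positivity)]
          nlinarith
        · rw [div_le_iff₀ (by positivity)]
          nlinarith
      calc cmin * δmin / (2 * Δ) * r = cmin * (δmin * r / (2 * Δ)) := by ring
        _ ≤ c i * r' := mul_le_mul (hcminle i) h3 (by positivity) (le_of_lt (hc0 i))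
    · rw [hD]
      exact h2.trans (min_le_left _ _)
end

section
/- Let X be a compact finite-dimensional metrizable space. Then for every metric d ∈ Met(X) and every ε > 0, there exists a metric D ∈ Met(X) with sup_{x,y}|D(x,y) − d(x,y)| < 4ε such that (X, D) embeds isometrically into some ℝ^N equipped with the ℓ^∞ norm. In particular, the set of metrics isometrically embeddable into a finite-dimensional ℓ^∞ space is dense in (Met(X), 𝒟_X). -/
open Set Topology

open Function MeasureTheory

/-- The covering dimension of `X` is at most `n`: every open cover admits an open
refinement that still covers and has order at most `n + 1`. -/
def CovDimLE (X : Type*) [TopologicalSpace X] (n : ℕ) : Prop :=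
  ∀ 𝒰 : Set (Set X), (∀ U ∈ 𝒰, IsOpen U) → ⋃₀ 𝒰 = univ →
    ∃ 𝒱 : Set (Set X), (∀ V ∈ 𝒱, IsOpen V) ∧ ⋃₀ 𝒱 = univ ∧
      (∀ V ∈ 𝒱, ∃ U ∈ 𝒰, V ⊆ U) ∧
      ∀ x : X, {V | V ∈ 𝒱 ∧ x ∈ V}.encard ≤ (n : ℕ∞) + 1

/-- "General position": any ≤ m+1 of the points admit no nontrivial affine relation. -/
def GPfam (m : ℕ) {K : ℕ} (p : Fin K → (Fin m → ℝ)) : Prop :=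
  ∀ w : Fin K → ℝ, (Finset.univ.filter fun i => w i ≠ 0).card ≤ m + 1 →
    ∑ i, w i = 0 → ∑ i, w i • p i = 0 → w = 0

lemma exists_gp_points (m : ℕ) (hm : 0 < m) (K : ℕ) (η : ℝ) (hη : 0 < η)
    (t : Fin K → (Fin m → ℝ)) :
    ∃ p : Fin K → (Fin m → ℝ), (∀ i, dist (p i) (t i) ≤ η) ∧ GPfam m p := by
  induction K with
  | zero =>
      exact ⟨Fin.elim0, fun i => i.elim0, fun w _ _ _ => funext fun i => i.elim0⟩
  | succ K ih =>
      obtain ⟨p, hp, hgp⟩ := ih (fun i => t i.castSucc)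
      -- bad set: affine combinations of points p indexed by s
      set A : Finset (Fin K) → Set (Fin m → ℝ) := fun s =>
        {x | ∃ w : Fin K → ℝ, (∀ i, w i ≠ 0 → i ∈ s) ∧ ∑ i, w i = 1 ∧ ∑ i, w i • p i = x} with hA
      have hAnull : ∀ s : Finset (Fin K), s.card ≤ m → volume (A s) = 0 := by
        intro s hs
        rcases s.eq_empty_or_nonempty with rfl | ⟨i₀, hi₀⟩
        · have he : A ∅ = ∅ := by
            ext x
            simp only [hA, mem_setOf_eq, mem_empty_iff_false, iff_false]
            rintro ⟨w, hw, hw1, -⟩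
            have hz : ∀ i, w i = 0 := fun i => by
              by_contra h; exact absurd (hw i h) (by simp)
            simp [hz] at hw1
          rw [he, measure_empty]
        · set W : Submodule ℝ (Fin m → ℝ) :=
            Submodule.span ℝ (((s.erase i₀).image fun i => p i - p i₀ : Finset (Fin m → ℝ)) : Set (Fin m → ℝ)) with hW
          have hWne : W ≠ ⊤ := by
            intro h
            have h1 : Module.finrank ℝ W ≤ ((s.erase i₀).image fun i => p i - p i₀).card :=
              finrank_span_finset_le_card _
            have h2 : ((s.erase i₀).image fun i => p i - p i₀).card ≤ s.card - 1 :=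
              le_trans Finset.card_image_le (le_of_eq (Finset.card_erase_of_mem hi₀))
            have h3 : Module.finrank ℝ W = m := by
              rw [h, finrank_top, Module.finrank_fin_fun]
            have hcard : 1 ≤ s.card := Finset.card_pos.mpr ⟨i₀, hi₀⟩
            omega
          refine measure_mono_null ?_
            (Measure.addHaar_affineSubspace volume (AffineSubspace.mk' (p i₀) W) ?_)
          · rintro x ⟨w, hw, hw1, rfl⟩
            rw [SetLike.mem_coe, AffineSubspace.mem_mk']
            have hsum : ∑ i, w i • p i = ∑ i ∈ s, w i • p i :=
              (Finset.sum_subset s.subset_univ (fun i _ hi => by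
                have : w i = 0 := by by_contra h; exact hi (hw i h)
                simp [this])).symm
            have hsum1 : ∑ i ∈ s, w i = 1 := by
              rw [← hw1]
              exact (Finset.sum_subset s.subset_univ (fun i _ hi => by
                by_contra h; exact hi (hw i h)))
            have key : (∑ i, w i • p i) -ᵥ p i₀ = ∑ i ∈ s.erase i₀, w i • (p i - p i₀) := by
              rw [hsum, vsub_eq_sub]
              have h4 : ∑ i ∈ s, w i • p i - p i₀ = ∑ i ∈ s, w i • (p i - p i₀) := by
                rw [Finset.sum_congr rfl (fun i _ => smul_sub (w i) (p i) (p i₀)),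
                  Finset.sum_sub_distrib, ← Finset.sum_smul, hsum1, one_smul]
              rw [h4]
              refine (Finset.sum_subset (s.erase_subset i₀) (fun i hi hni => ?_)).symm
              have : i = i₀ := by
                by_contra h; exact hni (Finset.mem_erase.mpr ⟨h, hi⟩)
              simp [this]
            rw [key]
            refine Submodule.sum_mem _ (fun i hi => Submodule.smul_mem _ _ ?_)
            exact Submodule.subset_span (by
              simp only [Finset.coe_image, mem_image]
              exact ⟨i, Finset.mem_coe.mpr hi, rfl⟩)
          · intro htop
            have hd := AffineSubspace.direction_mk' (p i₀) W
            rw [htop, AffineSubspace.direction_top] at hd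
            exact hWne hd.symm
      -- choose the new point q in the ball around `t (last)` avoiding all bad sets
      have hball : 0 < volume (Metric.ball (t (Fin.last K)) η) :=
        Metric.measure_ball_pos volume _ hη
      set Bad : Set (Fin m → ℝ) :=
        ⋃ s ∈ Finset.univ.powerset.filter (fun s : Finset (Fin K) => s.card ≤ m), A s with hBad
      have hBadnull : volume Bad = 0 := by
        refine measure_iUnion_null fun s => measure_iUnion_null fun hs => ?_
        exact hAnull s (Finset.mem_filter.mp hs).2
      have hne : (Metric.ball (t (Fin.last K)) η \ Bad).Nonempty := by
        rw [Set.nonempty_iff_ne_empty]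
        intro h
        have hsub : Metric.ball (t (Fin.last K)) η ⊆ Bad := by
          intro x hx
          by_contra hxB
          exact (Set.eq_empty_iff_forall_notMem.mp h x) ⟨hx, hxB⟩
        exact absurd (measure_mono_null hsub hBadnull) (ne_of_gt hball)
      obtain ⟨q, hqball, hqBad⟩ := hne
      refine ⟨Fin.snoc p q, ?_, ?_⟩
      · intro i
        induction i using Fin.lastCases with
        | last =>
            simp only [Fin.snoc_last]
            exact le_of_lt (Metric.mem_ball.mp hqball)
        | cast j =>
            simp only [Fin.snoc_castSucc]
            exact hp j
      · intro w hcard hw0 hwp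
        have hsum_split : ∑ i, w i • (Fin.snoc p q : Fin (K+1) → Fin m → ℝ) i
            = (∑ i : Fin K, w i.castSucc • p i) + w (Fin.last K) • q := by
          rw [Fin.sum_univ_castSucc]
          simp
        have hw0' : (∑ i : Fin K, w i.castSucc) + w (Fin.last K) = 0 := by
          rw [← Fin.sum_univ_castSucc]; exact hw0
        rw [hsum_split] at hwp
        by_cases hlast : w (Fin.last K) = 0
        · have hres : (fun i : Fin K => w i.castSucc) = 0 := by
            refine hgp _ ?_ ?_ ?_
            · refine le_trans (Finset.card_le_card_of_injOn Fin.castSucc ?_ ?_) hcard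
              · intro i hi
                simp only [Finset.mem_coe, Finset.mem_filter, Finset.mem_univ, true_and] at hi ⊢
                exact hi
              · exact fun a _ b _ hab => Fin.castSucc_injective K hab
            · rw [hlast, add_zero] at hw0'; exact hw0'
            · rw [hlast, zero_smul, add_zero] at hwp; exact hwp
          funext i
          induction i using Fin.lastCases with
          | last => exact hlast
          | cast j => exact congrFun hres j
        · exfalso
          set wl := w (Fin.last K) with hwl
          set v : Fin K → ℝ := fun i => -(w i.castSucc) / wl with hv
          have hsuppv : ∀ i, v i ≠ 0 → w i.castSucc ≠ 0 := by
            intro i hvi hwi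
            exact hvi (by simp [hv, hwi])
          have hvcard : (Finset.univ.filter fun i => v i ≠ 0).card ≤ m := by
            have hsub : ∀ i ∈ Finset.univ.filter (fun i => v i ≠ 0),
                Fin.castSucc i ∈ (Finset.univ.filter fun j => w j ≠ 0).erase (Fin.last K) := by
              intro i hi
              simp only [Finset.mem_filter, Finset.mem_univ, true_and] at hi
              refine Finset.mem_erase.mpr ⟨?_, ?_⟩
              · exact Fin.ne_of_lt (Fin.castSucc_lt_last i)
              · simp only [Finset.mem_filter, Finset.mem_univ, true_and]
                exact hsuppv i hi
            have hle := Finset.card_le_card_of_injOn Fin.castSucc hsub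
              (fun a _ b _ hab => Fin.castSucc_injective K hab)
            have herase : ((Finset.univ.filter fun j => w j ≠ 0).erase (Fin.last K)).card
                = (Finset.univ.filter fun j => w j ≠ 0).card - 1 :=
              Finset.card_erase_of_mem (by
                simp only [Finset.mem_filter, Finset.mem_univ, true_and]; exact hlast)
            omega
          have hwsum : (∑ i : Fin K, w i.castSucc) = -wl := by linarith
          have hvsum : ∑ i, v i = 1 := by
            simp only [hv]
            rw [← Finset.sum_div]
            rw [Finset.sum_neg_distrib, hwsum, neg_neg, div_self hlast]
          have hpsum : ∑ i : Fin K, w i.castSucc • p i = -(wl • q) := by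
            have := hwp
            rw [add_eq_zero_iff_eq_neg] at this
            exact this
          have hvq : ∑ i, v i • p i = q := by
            have : ∑ i, v i • p i = (-wl)⁻¹ • ∑ i : Fin K, w i.castSucc • p i := by
              rw [Finset.smul_sum]
              refine Finset.sum_congr rfl (fun i _ => ?_)
              rw [smul_smul, hv]
              congr 1
              field_simp
            rw [this, hpsum]
            rw [smul_neg, ← neg_smul, smul_smul]
            rw [neg_inv, neg_neg, inv_mul_cancel₀ hlast, one_smul]
          apply hqBad
          rw [hBad]
          refine Set.mem_iUnion₂.mpr ⟨(Finset.univ.filter fun i => v i ≠ 0 : Finset (Fin K)), ?_, ?_⟩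
          · exact Finset.mem_filter.mpr ⟨Finset.mem_powerset.mpr (Finset.subset_univ _), hvcard⟩
          · exact ⟨v, fun i hi => by simp [hi], hvsum, hvq⟩

lemma dense_step {Y : Type*} [MetricSpace Y] [CompactSpace Y] {n : ℕ} (hdim : CovDimLE Y n)
    (f : C(Y, Fin (2*n+1) → ℝ)) {η δ : ℝ} (hη : 0 < η) (hδ : 0 < δ) :
    ∃ g : C(Y, Fin (2*n+1) → ℝ), (∀ x, dist (g x) (f x) ≤ η) ∧
      ∀ x y : Y, g x = g y → dist x y < δ := by
  classical
  set E := (Fin (2*n+1) → ℝ)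
  set 𝒰 : Set (Set Y) :=
    {U | IsOpen U ∧ ∃ z, U ⊆ Metric.ball z (δ/2) ∧ ∀ x ∈ U, dist (f x) (f z) < η/3} with h𝒰
  have h𝒰open : ∀ U ∈ 𝒰, IsOpen U := fun U hU => hU.1
  have h𝒰cover : ⋃₀ 𝒰 = univ := by
    refine eq_univ_of_forall fun x => ?_
    refine ⟨Metric.ball x (δ/2) ∩ f ⁻¹' Metric.ball (f x) (η/3), ?_, ?_⟩
    · refine ⟨(Metric.isOpen_ball).inter (f.continuous.isOpen_preimage _ Metric.isOpen_ball),
        x, inter_subset_left, ?_⟩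
      intro y hy
      exact Metric.mem_ball.mp hy.2
    · exact ⟨Metric.mem_ball_self (by positivity), by simp [Metric.mem_ball_self (by positivity : (0:ℝ) < η/3)]⟩
  obtain ⟨𝒱, hVopen, hVcover, hVref, hVorder⟩ := hdim 𝒰 h𝒰open h𝒰cover
  obtain ⟨t, ht⟩ := isCompact_univ.elim_finite_subcover (fun V : 𝒱 => (V : Set Y))
    (fun V => hVopen V V.2) (by rw [← sUnion_eq_iUnion, hVcover])
  set K := t.card with hK
  set e : Fin K → { V // V ∈ 𝒱 } := fun i => (t.equivFin.symm i : { V // V ∈ 𝒱 }) with he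
  have heinj : Function.Injective e := fun i j hij => by
    have := Subtype.coe_injective hij
    exact t.equivFin.symm.injective (Subtype.coe_injective (by exact hij))
  set U : Fin K → Set Y := fun i => ((e i : { V // V ∈ 𝒱 }) : Set Y) with hU
  have hUinj : Function.Injective U := by
    intro i j hij
    apply t.equivFin.symm.injective
    exact Subtype.coe_injective (Subtype.coe_injective hij)
  have hUmem : ∀ i, U i ∈ 𝒱 := fun i => (e i).2
  have hUopen : ∀ i, IsOpen (U i) := fun i => hVopen _ (hUmem i)
  have hUcover : (univ : Set Y) ⊆ ⋃ i, U i := by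
    intro x hx
    obtain ⟨V, hVt, hxV⟩ := mem_iUnion₂.mp (ht hx)
    exact mem_iUnion.mpr ⟨t.equivFin ⟨V, hVt⟩, by simp [hU, he]; exact hxV⟩
  -- the refinement data
  have hzdata : ∀ i, ∃ z, U i ⊆ Metric.ball z (δ/2) ∧ ∀ x ∈ U i, dist (f x) (f z) < η/3 := by
    intro i
    obtain ⟨U', hU'𝒰, hsub⟩ := hVref (U i) (hUmem i)
    obtain ⟨-, z, hz1, hz2⟩ := hU'𝒰
    exact ⟨z, hsub.trans hz1, fun x hx => hz2 x (hsub hx)⟩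
  choose z hz1 hz2 using hzdata
  -- partition of unity
  obtain ⟨ρ, hρsub⟩ := PartitionOfUnity.exists_isSubordinate_of_locallyFinite
    isClosed_univ U hUopen (locallyFinite_of_finite _) hUcover
  have hρ1 : ∀ x : Y, ∑ i, ρ i x = 1 := fun x => by
    have := ρ.sum_eq_one (mem_univ x)
    rwa [finsum_eq_sum_of_fintype] at this
  have hsupp : ∀ i x, ρ i x ≠ 0 → x ∈ U i := fun i x h =>
    hρsub i (subset_tsupport _ h)
  -- points in general position
  obtain ⟨p, hpdist, hgp⟩ := exists_gp_points (2*n+1) (by omega) K (η/3) (by positivity)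
    (fun i => f (z i))
  set g : C(Y, E) := ⟨fun x => ∑ i, ρ i x • p i,
    continuous_finset_sum _ fun i _ => ((ρ i).continuous.smul continuous_const)⟩ with hg
  have hcard1 : ∀ x : Y, (Finset.univ.filter fun i => ρ i x ≠ 0).card ≤ n + 1 := by
    intro x
    set s := (Finset.univ.filter fun i => ρ i x ≠ 0) with hs
    have h1 : U '' ↑s ⊆ {V | V ∈ 𝒱 ∧ x ∈ V} := by
      rintro V ⟨i, hi, rfl⟩
      simp only [hs, Finset.coe_filter, mem_setOf_eq] at hi
      exact ⟨hUmem i, hsupp i x hi.2⟩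
    have h2 : (↑s : Set (Fin K)).encard ≤ (n : ℕ∞) + 1 := by
      rw [← hUinj.injOn.encard_image]
      exact le_trans (Set.encard_mono h1) (hVorder x)
    rw [Set.encard_coe_eq_coe_finsetCard] at h2
    exact_mod_cast h2
  refine ⟨g, ?_, ?_⟩
  · intro x
    have hgf : g x - f x = ∑ i, ρ i x • (p i - f x) := by
      have : ∑ i, ρ i x • (p i - f x) = (∑ i, ρ i x • p i) - (∑ i, ρ i x) • f x := by
        rw [Finset.sum_smul]
        rw [← Finset.sum_sub_distrib]
        exact Finset.sum_congr rfl fun i _ => smul_sub _ _ _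
      rw [this, hρ1, one_smul]
      rfl
    rw [dist_eq_norm, hgf]
    calc ‖∑ i, ρ i x • (p i - f x)‖ ≤ ∑ i, ‖ρ i x • (p i - f x)‖ := norm_sum_le _ _
    _ ≤ ∑ i, ρ i x * η := by
        refine Finset.sum_le_sum fun i _ => ?_
        rw [norm_smul, Real.norm_eq_abs, abs_of_nonneg (ρ.nonneg i x)]
        by_cases hρi : ρ i x = 0
        · simp [hρi]
        · refine mul_le_mul_of_nonneg_left ?_ (ρ.nonneg i x)
          have hxU := hsupp i x hρi
          calc ‖p i - f x‖ ≤ ‖p i - f (z i)‖ + ‖f (z i) - f x‖ := norm_sub_le_norm_sub_add_norm_sub _ _ _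
          _ ≤ η/3 + η/3 := by
              gcongr
              · rw [← dist_eq_norm]; exact hpdist i
              · rw [← dist_eq_norm, dist_comm]; exact le_of_lt (hz2 i x hxU)
          _ ≤ η := by linarith
    _ = η := by rw [← Finset.sum_mul, hρ1, one_mul]
  · intro x y hgxy
    set w : Fin K → ℝ := fun i => ρ i x - ρ i y with hw
    have hw0 : w = 0 := by
      refine hgp w ?_ ?_ ?_
      · have hsub : (Finset.univ.filter fun i => w i ≠ 0) ⊆
            (Finset.univ.filter fun i => ρ i x ≠ 0) ∪ (Finset.univ.filter fun i => ρ i y ≠ 0) := by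
          intro i hi
          simp only [Finset.mem_filter, Finset.mem_univ, true_and, Finset.mem_union] at hi ⊢
          by_contra hc
          push_neg at hc
          apply hi
          simp [hw, hc.1, hc.2]
        calc (Finset.univ.filter fun i => w i ≠ 0).card
            ≤ _ := Finset.card_le_card hsub
          _ ≤ (Finset.univ.filter fun i => ρ i x ≠ 0).card
              + (Finset.univ.filter fun i => ρ i y ≠ 0).card := Finset.card_union_le _ _
          _ ≤ (n+1) + (n+1) := add_le_add (hcard1 x) (hcard1 y)
          _ = (2*n+1) + 1 := by ring
      · simp only [hw]
        rw [Finset.sum_sub_distrib, hρ1, hρ1, sub_self]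
      · simp only [hw]
        have : ∑ i, (ρ i x - ρ i y) • p i = (∑ i, ρ i x • p i) - ∑ i, ρ i y • p i := by
          rw [← Finset.sum_sub_distrib]
          exact Finset.sum_congr rfl fun i _ => sub_smul _ _ _
        rw [this]
        have hgx : (∑ i, ρ i x • p i) = g x := rfl
        have hgy : (∑ i, ρ i y • p i) = g y := rfl
        rw [hgx, hgy, hgxy, sub_self]
    have hρeq : ∀ i, ρ i x = ρ i y := fun i => by
      have := congrFun hw0 i
      simpa [hw, sub_eq_zero] using this
    have hex : ∃ i, ρ i x ≠ 0 := by
      by_contra hc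
      push_neg at hc
      have := hρ1 x
      simp [hc] at this
    obtain ⟨i, hi⟩ := hex
    have hxU := hsupp i x hi
    have hyU := hsupp i y (by rw [← hρeq i]; exact hi)
    have h1 := hz1 i hxU
    have h2 := hz1 i hyU
    rw [Metric.mem_ball] at h1 h2
    calc dist x y ≤ dist x (z i) + dist (z i) y := dist_triangle _ _ _
      _ < δ/2 + δ/2 := by rw [dist_comm (z i) y]; exact add_lt_add h1 h2
      _ = δ := by ring

lemma exists_injective_continuous {Y : Type*} [MetricSpace Y] [CompactSpace Y] {n : ℕ}
    (hdim : CovDimLE Y n) :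
    ∃ h : Y → (Fin (2*n+1) → ℝ), Continuous h ∧ Function.Injective h := by
  classical
  set E := (Fin (2*n+1) → ℝ)
  set G : ℕ → Set C(Y, E) := fun k =>
    {f | ∀ x y : Y, 1/(k+1 : ℝ) ≤ dist x y → f x ≠ f y} with hG
  have hGopen : ∀ k, IsOpen (G k) := by
    intro k
    rw [Metric.isOpen_iff]
    intro f hf
    set Kc : Set (Y × Y) := {q | 1/(k+1 : ℝ) ≤ dist q.1 q.2} with hKc
    have hKcl : IsClosed Kc := isClosed_le continuous_const (by fun_prop)
    have hKcomp : IsCompact Kc := hKcl.isCompact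
    rcases Kc.eq_empty_or_nonempty with hKe | hKne
    · refine ⟨1, one_pos, fun g _ => ?_⟩
      intro x y hxy
      exact absurd (Set.eq_empty_iff_forall_notMem.mp hKe (x, y)) (by exact fun h => h hxy)
    · obtain ⟨q₀, hq₀K, hq₀min⟩ := hKcomp.exists_isMinOn hKne
        (Continuous.continuousOn (by fun_prop : Continuous fun q : Y × Y => dist (f q.1) (f q.2)))
      set c := dist (f q₀.1) (f q₀.2) with hc
      have hcpos : 0 < c := by
        rw [hc, dist_pos]
        exact hf q₀.1 q₀.2 hq₀K
      refine ⟨c/3, by positivity, fun g hg => ?_⟩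
      rw [Metric.mem_ball] at hg
      intro x y hxy heq
      have h1 : c ≤ dist (f x) (f y) := hq₀min (show (x,y) ∈ Kc from hxy)
      have h2 : dist (g x) (f x) ≤ dist g f := ContinuousMap.dist_apply_le_dist x
      have h3 : dist (g y) (f y) ≤ dist g f := ContinuousMap.dist_apply_le_dist y
      have h4 : dist (f x) (f y) ≤ dist (f x) (g x) + dist (g x) (g y) + dist (g y) (f y) :=
        dist_triangle4 _ _ _ _
      rw [heq, dist_self, add_zero] at h4
      have h2' : dist (f x) (g y) ≤ dist g f := by rw [dist_comm, ← heq]; exact h2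
      linarith
  have hGdense : ∀ k, Dense (G k) := by
    intro k
    rw [Metric.dense_iff]
    intro f r hr
    obtain ⟨g, hgdist, hgsep⟩ := dense_step hdim f (by positivity : (0:ℝ) < r/2)
      (by positivity : (0:ℝ) < 1/(k+1 : ℝ))
    refine ⟨g, Metric.mem_ball.mpr ?_, ?_⟩
    · calc dist g f ≤ r/2 := (ContinuousMap.dist_le (by positivity)).mpr hgdist
        _ < r := by linarith
    · intro x y hxy heq
      exact absurd (hgsep x y heq) (not_lt.mpr hxy)
  have hnonempty : Nonempty C(Y, E) := ⟨ContinuousMap.const Y 0⟩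
  haveI : BaireSpace C(Y, E) := BaireSpace.of_completelyPseudoMetrizable
  have hdense : Dense (⋂ k, G k) := dense_iInter_of_isOpen_nat hGopen hGdense
  obtain ⟨f, hf⟩ := hdense.nonempty
  refine ⟨f, f.continuous, ?_⟩
  intro x y heq
  by_contra hne
  have hpos : 0 < dist x y := dist_pos.mpr hne
  obtain ⟨k, hk⟩ := exists_nat_one_div_lt hpos
  exact (Set.mem_iInter.mp hf k) x y (le_of_lt hk) heq

/-- On a compact finite-dimensional metrizable space, metrics isometrically
embeddable into some `ℝ^N` with the sup (`ℓ^∞`) metric are `𝒟_X`-dense. -/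
theorem dense_isometrically_embeddable {X : Type*} [TopologicalSpace X]
    [CompactSpace X] [TopologicalSpace.MetrizableSpace X]
    (hdim : ∃ n : ℕ, CovDimLE X n) :
    ∀ d : X → X → ℝ, IsMetricOn d → GeneratesTopology d → ∀ ε : ℝ, 0 < ε →
      ∃ D : X → X → ℝ, IsMetricOn D ∧ GeneratesTopology D ∧
        (⨆ q : X × X, ENNReal.ofReal |D q.1 q.2 - d q.1 q.2|) < ENNReal.ofReal (4 * ε) ∧
        ∃ (N : ℕ) (f : X → (Fin N → ℝ)), ∀ x y, dist (f x) (f y) = D x y := by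
  classical
  obtain ⟨n, hdim⟩ := hdim
  intro d hd hgen ε hε
  have h4ε : (0:ℝ) < 4 * ε := by linarith
  rcases isEmpty_or_nonempty X with hX | hX
  · refine ⟨d, hd, hgen, ?_, 0, fun _ => finZeroElim, fun x _ => isEmptyElim x⟩
    have : IsEmpty (X × X) := by infer_instance
    rw [iSup_of_empty]
    simpa using ENNReal.ofReal_pos.mpr h4ε
  letI M : MetricSpace X := MetricSpace.ofDistTopology d
    (fun x => (hd.1 x x).mpr rfl) hd.2.1 (fun x y z => hd.2.2 x z y) hgen
    (fun x y h => (hd.1 x y).mp h)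
  have hdist : ∀ x y : X, dist x y = d x y := fun x y => rfl
  obtain ⟨h, hcont, hinj⟩ := exists_injective_continuous (Y := X) hdim
  obtain ⟨C, hC⟩ := isCompact_univ.exists_bound_of_continuousOn hcont.continuousOn
  have hC0 : 0 ≤ C := le_trans (norm_nonneg _) (hC hX.some (mem_univ _))
  set δ₀ : ℝ := ε / (2*C+1) with hδ₀
  have hδ₀pos : 0 < δ₀ := by positivity
  -- finite ε-net
  obtain ⟨t, ht⟩ := isCompact_univ.elim_finite_subcover (fun x : X => Metric.ball x ε)
    (fun _ => Metric.isOpen_ball) (fun x _ => mem_iUnion.mpr ⟨x, Metric.mem_ball_self hε⟩)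
  set K₁ := t.card with hK₁
  set en : Fin K₁ → X := fun i => (t.equivFin.symm i : X) with hen
  have hnet : ∀ x : X, ∃ i, d x (en i) < ε := by
    intro x
    obtain ⟨z, hz, hxz⟩ := mem_iUnion₂.mp (ht (mem_univ x))
    refine ⟨t.equivFin ⟨z, hz⟩, ?_⟩
    have : en (t.equivFin ⟨z, hz⟩) = z := by simp [hen]
    rw [this, ← hdist]
    exact Metric.mem_ball.mp hxz
  set F : X → Fin (K₁ + (2*n+1)) → ℝ := fun x =>
    Fin.append (fun i => d x (en i)) (fun j => δ₀ * h x j) with hF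
  have hFleft : ∀ x i, F x (Fin.castAdd (2*n+1) i) = d x (en i) := by
    intro x i; simp [hF, Fin.append_left]
  have hFright : ∀ x j, F x (Fin.natAdd K₁ j) = δ₀ * h x j := by
    intro x j; simp [hF, Fin.append_right]
  have hFcont : Continuous F := by
    refine continuous_pi fun j => ?_
    refine Fin.addCases (motive := fun j => Continuous fun x => F x j) ?_ ?_ j
    · intro i
      simp only [hFleft]
      simp only [← hdist]
      exact continuous_id.dist continuous_const
    · intro i
      simp only [hFright]
      exact continuous_const.mul ((continuous_apply i).comp hcont)
  have hFinj : Function.Injective F := by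
    intro x y hxy
    apply hinj
    funext j
    have hco := congrFun hxy (Fin.natAdd K₁ j)
    rw [hFright, hFright] at hco
    exact mul_left_cancel₀ (ne_of_gt hδ₀pos) hco
  set D : X → X → ℝ := fun x y => dist (F x) (F y) with hD
  have hDmet : IsMetricOn D := by
    refine ⟨fun x y => ⟨fun h0 => hFinj ?_, fun hxy => ?_⟩, fun x y => dist_comm _ _,
      fun x y z => dist_triangle _ _ _⟩
    · replace h0 : dist (F x) (F y) = 0 := h0
      rwa [dist_eq_zero] at h0
    · show dist (F x) (F y) = 0
      rw [hxy, dist_self]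
  have hemb : IsEmbedding F := (hFcont.isClosedEmbedding hFinj).toIsEmbedding
  have hDgen : GeneratesTopology D := by
    intro s
    constructor
    · intro hs x hx
      obtain ⟨u, hu, hpre⟩ := hemb.toIsInducing.isOpen_iff.mp hs
      rw [← hpre] at hx
      obtain ⟨r, hr, hball⟩ := Metric.isOpen_iff.mp hu (F x) hx
      refine ⟨r, hr, fun y hy => ?_⟩
      rw [← hpre]
      exact hball (by rwa [Metric.mem_ball, dist_comm])
    · intro hcond
      choose r hr hrs using hcond
      have hse : s = F ⁻¹' (⋃ x : s, Metric.ball (F x) (r x x.2)) := by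
        ext y
        constructor
        · intro hy
          exact mem_preimage.mpr (mem_iUnion.mpr ⟨⟨y, hy⟩, Metric.mem_ball_self (hr y hy)⟩)
        · intro hy
          obtain ⟨⟨x, hxs⟩, hyx⟩ := mem_iUnion.mp (mem_preimage.mp hy)
          refine hrs x hxs y ?_
          have hlt := Metric.mem_ball.mp hyx
          rw [dist_comm] at hlt
          exact hlt
      rw [hse]
      exact (isOpen_iUnion fun x => Metric.isOpen_ball).preimage hFcont
  have hd0 : ∀ x y : X, 0 ≤ d x y := fun x y => by rw [← hdist]; exact dist_nonneg
  have hupper : ∀ x y : X, D x y ≤ d x y + ε := by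
    intro x y
    rw [hD]
    refine (dist_pi_le_iff (by linarith [hd0 x y])).mpr fun j => ?_
    refine Fin.addCases (motive := fun j => dist (F x j) (F y j) ≤ d x y + ε) ?_ ?_ j
    · intro i
      rw [hFleft, hFleft, Real.dist_eq]
      have h1 : |dist x (en i) - dist y (en i)| ≤ dist x y := abs_dist_sub_le x y (en i)
      rw [hdist, hdist, hdist] at h1
      linarith
    · intro i
      rw [hFright, hFright, Real.dist_eq, ← mul_sub, abs_mul,
        abs_of_nonneg (le_of_lt hδ₀pos)]
      have h1 : |h x i - h y i| ≤ ‖h x‖ + ‖h y‖ := by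
        have hx1 : |h x i| ≤ ‖h x‖ := by
          have := norm_le_pi_norm (h x) i
          simpa [Real.norm_eq_abs] using this
        have hy1 : |h y i| ≤ ‖h y‖ := by
          have := norm_le_pi_norm (h y) i
          simpa [Real.norm_eq_abs] using this
        calc |h x i - h y i| ≤ |h x i| + |h y i| := abs_sub _ _
          _ ≤ ‖h x‖ + ‖h y‖ := add_le_add hx1 hy1
      have h2 : ‖h x‖ + ‖h y‖ ≤ 2*C := by
        have := hC x (mem_univ x); have := hC y (mem_univ y); linarith
      have h3 : δ₀ * |h x i - h y i| ≤ δ₀ * (2*C) :=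
        mul_le_mul_of_nonneg_left (le_trans h1 h2) (le_of_lt hδ₀pos)
      have h4 : δ₀ * (2*C) ≤ ε := by
        rw [hδ₀, div_mul_eq_mul_div, div_le_iff₀ (by linarith : (0:ℝ) < 2*C+1)]
        nlinarith
      linarith [hd0 x y]
  have hlower : ∀ x y : X, d x y - 2*ε ≤ D x y := by
    intro x y
    obtain ⟨i, hi⟩ := hnet x
    have hcoord : dist (F x (Fin.castAdd (2*n+1) i)) (F y (Fin.castAdd (2*n+1) i)) ≤ D x y := by
      rw [hD]; exact dist_le_pi_dist (F x) (F y) _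
    rw [hFleft, hFleft, Real.dist_eq] at hcoord
    have htri : d x y ≤ d x (en i) + d y (en i) := by
      have := hd.2.2 x y (en i)
      rwa [hd.2.1 (en i) y] at this
    have habs : d y (en i) - d x (en i) ≤ |d x (en i) - d y (en i)| := by
      rw [abs_sub_comm]; exact le_abs_self _
    linarith
  refine ⟨D, hDmet, hDgen, ?_, K₁ + (2*n+1), F, fun x y => rfl⟩
  have hbound : ∀ q : X × X, |D q.1 q.2 - d q.1 q.2| ≤ 2*ε := by
    intro q
    rw [abs_le]
    constructor
    · have := hlower q.1 q.2; linarith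
    · have := hupper q.1 q.2; linarith
  calc (⨆ q : X × X, ENNReal.ofReal |D q.1 q.2 - d q.1 q.2|)
      ≤ ENNReal.ofReal (2*ε) := iSup_le fun q => ENNReal.ofReal_le_ofReal (hbound q)
    _ < ENNReal.ofReal (4*ε) := (ENNReal.ofReal_lt_ofReal_iff h4ε).mpr (by linarith)
end

section
/- Let X be a metrizable space. If the set of doubling metrics is dense in (Met(X), 𝒟_X), then X is compact. Equivalently: if X is not compact, then there exists a metric D ∈ Met(X) such that every metric d ∈ Met(X) with 𝒟_X(d, D) < 1/2 is non-doubling. -/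
open Set Topology ENNReal

/-- The sup-distance `𝒟_X` between two metrics, valued in `ℝ≥0∞`. -/
noncomputable def supDist {X : Type*} (d e : X → X → ℝ) : ℝ≥0∞ :=
  ⨆ q : X × X, ENNReal.ofReal |d q.1 q.2 - e q.1 q.2|

/-- `d` is doubling. -/
def Doubling {X : Type*} (d : X → X → ℝ) : Prop :=
  ∃ C : ℝ, 1 ≤ C ∧ ∃ β : ℝ, 0 < β ∧ ∀ F : Finset X, 2 ≤ F.card →
    (F.card : ℝ) ≤ C * (finsetDiam d F / finsetAlpha d F) ^ β

/-- Auxiliary: truncation at `2` of `dist + |v x - v y|` is a compatible metric. -/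
theorem aux_metric {X : Type*} [MetricSpace X] {v : X → ℝ} (hv : Continuous v) :
    IsMetricOn (fun x y => min (dist x y + |v x - v y|) 2) ∧
    GeneratesTopology (fun x y => min (dist x y + |v x - v y|) 2) := by
  constructor
  · refine ⟨fun x y => ?_, fun x y => by simp [dist_comm, abs_sub_comm], fun x y z => ?_⟩
    · constructor
      · intro h
        have ha : (0:ℝ) ≤ dist x y := dist_nonneg
        have hb : (0:ℝ) ≤ |v x - v y| := abs_nonneg _
        have hd : dist x y = 0 := by
          rcases min_eq_iff.mp h with h' | h'
          · linarith [h'.1]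
          · linarith [h'.1]
        exact dist_eq_zero.mp hd
      · rintro rfl; simp
    · show min (dist x y + |v x - v y|) 2 ≤
        min (dist x z + |v x - v z|) 2 + min (dist z y + |v z - v y|) 2
      rcases le_or_gt 2 (dist x z + |v x - v z|) with h | h
      · have h1 : min (dist x z + |v x - v z|) 2 = 2 := min_eq_right h
        have h2 : (0:ℝ) ≤ min (dist z y + |v z - v y|) 2 :=
          le_min (by positivity) (by norm_num)
        have h3 := min_le_right (dist x y + |v x - v y|) 2
        linarith
      · rcases le_or_gt 2 (dist z y + |v z - v y|) with h' | h'
        · have h1 : min (dist z y + |v z - v y|) 2 = 2 := min_eq_right h'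
          have h2 : (0:ℝ) ≤ min (dist x z + |v x - v z|) 2 :=
            le_min (by positivity) (by norm_num)
          have h3 := min_le_right (dist x y + |v x - v y|) 2
          linarith
        · rw [min_eq_left h.le, min_eq_left h'.le]
          have t1 := dist_triangle x z y
          have t2 := abs_sub_le (v x) (v z) (v y)
          have := min_le_left (dist x y + |v x - v y|) 2
          linarith
  · intro s
    rw [Metric.isOpen_iff]
    constructor
    · intro hs x hx
      obtain ⟨δ, hδ, hball⟩ := hs x hx
      refine ⟨min δ 1, by positivity, fun y hy => ?_⟩
      have hρ : dist x y + |v x - v y| < δ := by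
        by_contra hcon
        push_neg at hcon
        have h2 : min δ 1 ≤ min (dist x y + |v x - v y|) 2 :=
          le_min (le_trans (min_le_left _ _) hcon)
            (le_trans (min_le_right _ _) (by norm_num))
        linarith
      have hd : dist y x < δ := by
        rw [dist_comm]; linarith [abs_nonneg (v x - v y)]
      exact hball (Metric.mem_ball.mpr hd)
    · intro h x hx
      obtain ⟨ε, hε, hb⟩ := h x hx
      obtain ⟨δ₁, hδ₁, hv₁⟩ := Metric.continuous_iff.mp hv x (ε/2) (by linarith)
      refine ⟨min δ₁ (ε/2), by positivity, fun y hy => ?_⟩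
      apply hb
      have hyx := Metric.mem_ball.mp hy
      have h1 : dist (v y) (v x) < ε/2 := hv₁ y (lt_of_lt_of_le hyx (min_le_left _ _))
      have h2 : dist y x < ε/2 := lt_of_lt_of_le hyx (min_le_right _ _)
      have h3 : |v x - v y| = dist (v y) (v x) := by rw [Real.dist_eq, abs_sub_comm]
      have h4 : dist x y + |v x - v y| < ε := by
        rw [dist_comm x y, h3]; linarith
      exact lt_of_le_of_lt (min_le_left _ _) h4

/-- If the doubling metrics are dense in `(Met(X), 𝒟_X)`, then `X` is compact. -/
theorem compact_of_dense_doubling {X : Type*} [TopologicalSpace X]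
    [TopologicalSpace.MetrizableSpace X]
    (hdense : ∀ d : X → X → ℝ, IsMetricOn d → GeneratesTopology d →
      ∀ ε : ℝ≥0∞, 0 < ε → ∃ D : X → X → ℝ, IsMetricOn D ∧ GeneratesTopology D ∧
        Doubling D ∧ supDist d D < ε) :
    CompactSpace X := by
  classical
  letI m : MetricSpace X := TopologicalSpace.metrizableSpaceMetric X
  by_contra hnc
  rw [← isCompact_univ_iff] at hnc
  have hnsc : ¬ IsSeqCompact (univ : Set X) := fun h => hnc h.isCompact
  unfold IsSeqCompact at hnsc
  push_neg at hnsc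
  obtain ⟨u, -, hu⟩ := hnsc
  -- no cluster points of the sequence `u`
  have hclus : ∀ x : X, ¬ MapClusterPt x Filter.atTop u := by
    intro x hx
    obtain ⟨ψ, hψ, hten⟩ := TopologicalSpace.FirstCountableTopology.tendsto_subseq hx
    exact hu x (mem_univ x) ψ hψ hten
  -- the range of `u` is infinite
  have hinf : (Set.range u).Infinite := by
    intro hfin
    haveI : Finite ↥(Set.range u) := hfin.to_subtype
    obtain ⟨y, hy⟩ := Finite.exists_infinite_fiber
      (fun n => (⟨u n, Set.mem_range_self n⟩ : Set.range u))
    have h1 : {n : ℕ | u n = (y : X)} =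
        (fun n => (⟨u n, Set.mem_range_self n⟩ : Set.range u)) ⁻¹' {y} := by
      ext n; simp [Subtype.ext_iff]
    have h2 : {n : ℕ | u n = (y : X)}.Infinite := by
      rw [h1]; exact Set.infinite_coe_iff.mp hy
    obtain ⟨φ, hφ, hφy⟩ := Filter.extraction_of_frequently_atTop
      (Nat.frequently_atTop_iff_infinite.mpr h2)
    have hten : Filter.Tendsto (u ∘ φ) Filter.atTop (𝓝 (y : X)) := by
      have heq : (u ∘ φ) = fun _ => (y : X) := funext fun n => hφy n
      rw [heq]; exact tendsto_const_nhds
    exact hu y (mem_univ _) φ hφ hten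
  -- the injective sequence `b`
  set b : ℕ → X := fun n => ((Set.Infinite.natEmbedding _ hinf n : Set.range u) : X) with hbdef
  have hbinj : Function.Injective b := fun i j h =>
    (Set.Infinite.natEmbedding _ hinf).injective (Subtype.coe_injective h)
  have hrange : ∀ n, b n ∈ Set.range u := fun n => (Set.Infinite.natEmbedding _ hinf n).2
  -- every point has a neighborhood meeting the range of `b` in a finite set
  have hloc : ∀ x : X, ∃ s ∈ 𝓝 x, (s ∩ Set.range b).Finite := by
    intro x
    have hx := hclus x
    rw [mapClusterPt_iff_frequently] at hx
    push_neg at hx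
    obtain ⟨s, hs, hev⟩ := hx
    have hfin : {n : ℕ | u n ∈ s}.Finite := by
      by_contra hinf'
      exact (Filter.not_frequently.mpr hev) (Nat.frequently_atTop_iff_infinite.mpr hinf')
    refine ⟨s, hs, Set.Finite.subset (hfin.image u) ?_⟩
    rintro y ⟨hys, n, rfl⟩
    obtain ⟨k, hk⟩ := hrange n
    exact ⟨k, by show u k ∈ s; rw [hk]; exact hys, hk⟩
  -- the range of `b` is closed
  have hA_closed : IsClosed (Set.range b) := by
    rw [isClosed_iff_frequently]
    intro x hx
    by_contra hxA
    obtain ⟨s, hs, hfin⟩ := hloc x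
    have hT : IsClosed (s ∩ Set.range b) := hfin.isClosed
    have hmem : s ∩ (s ∩ Set.range b)ᶜ ∈ 𝓝 x :=
      Filter.inter_mem hs (hT.isOpen_compl.mem_nhds fun h => hxA h.2)
    obtain ⟨y, hyA, hys, hyc⟩ := (hx.and_eventually hmem).exists
    exact hyc ⟨hys, hyA⟩
  -- the range of `b` is discrete
  haveI hdisc : DiscreteTopology (Set.range b) := by
    rw [discreteTopology_subtype_iff]
    intro x hxA
    obtain ⟨s, hs, hfin⟩ := hloc x
    rw [← Filter.empty_mem_iff_bot]
    have hT : IsClosed ((s ∩ Set.range b) \ {x}) :=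
      (hfin.subset Set.diff_subset).isClosed
    have hxT : x ∉ (s ∩ Set.range b) \ {x} := fun h => h.2 rfl
    have hU : s ∩ ((s ∩ Set.range b) \ {x})ᶜ ∈ 𝓝 x :=
      Filter.inter_mem hs (hT.isOpen_compl.mem_nhds hxT)
    have h1 : (s ∩ ((s ∩ Set.range b) \ {x})ᶜ) ∩ {x}ᶜ ∈ 𝓝[≠] x :=
      Filter.inter_mem (mem_nhdsWithin_of_mem_nhds hU) self_mem_nhdsWithin
    refine Filter.mem_of_superset
      (Filter.inter_mem_inf h1 (Filter.mem_principal_self (Set.range b))) ?_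
    rintro y ⟨⟨⟨hys, hyT⟩, hyx⟩, hyA⟩
    exact (hyT ⟨⟨hys, hyA⟩, hyx⟩).elim
  -- Tietze extension of the index function
  have hleft : ∀ n, Function.invFun b (b n) = n := fun n =>
    Function.leftInverse_invFun hbinj n
  let f : C(Set.range b, ℝ) :=
    ⟨fun z => 4 * ((Function.invFun b (z : X) : ℕ) : ℝ), continuous_of_discreteTopology⟩
  obtain ⟨v, hv⟩ := f.exists_restrict_eq hA_closed
  have hvb : ∀ n : ℕ, v (b n) = 4 * n := by
    intro n
    have h1 := ContinuousMap.congr_fun hv ⟨b n, Set.mem_range_self n⟩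
    simpa [f, hleft n] using h1
  -- the metric `d`
  obtain ⟨hdm, hdg⟩ := aux_metric (X := X) v.continuous
  obtain ⟨D, hDm, -, hDd, hDclose⟩ :=
    hdense _ hdm hdg (ENNReal.ofReal (1/2))
      (ENNReal.ofReal_pos.mpr (by norm_num))
  have hpt : ∀ x y : X, |min (dist x y + |v x - v y|) 2 - D x y| < 1/2 := by
    intro x y
    have h1 : ENNReal.ofReal |min (dist x y + |v x - v y|) 2 - D x y| ≤
        supDist (fun x y => min (dist x y + |v x - v y|) 2) D :=
      le_iSup (fun q : X × X =>
        ENNReal.ofReal |min (dist q.1 q.2 + |v q.1 - v q.2|) 2 - D q.1 q.2|) (x, y)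
    exact (ENNReal.ofReal_lt_ofReal_iff (by norm_num)).mp (lt_of_le_of_lt h1 hDclose)
  -- distances between the `b i` under `D`
  have hDb : ∀ i j : ℕ, i ≠ j → 3/2 < D (b i) (b j) ∧ D (b i) (b j) < 5/2 := by
    intro i j hij
    have h1 : (1:ℝ) ≤ |(i:ℝ) - (j:ℝ)| := by
      have hne : ((i:ℤ) - (j:ℤ)) ≠ 0 := sub_ne_zero.mpr (by exact_mod_cast hij)
      calc (1:ℝ) ≤ |(((i:ℤ) - (j:ℤ) : ℤ) : ℝ)| := by
            exact_mod_cast Int.one_le_abs hne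
        _ = |(i:ℝ) - (j:ℝ)| := by push_cast; ring_nf
    have h4 : (4:ℝ) ≤ |v (b i) - v (b j)| := by
      rw [hvb i, hvb j, show (4*(i:ℝ) - 4*(j:ℝ)) = 4*((i:ℝ)-(j:ℝ)) by ring, abs_mul]
      rw [show |(4:ℝ)| = 4 by norm_num]
      linarith
    have hd2 : min (dist (b i) (b j) + |v (b i) - v (b j)|) 2 = 2 := by
      apply min_eq_right
      linarith [dist_nonneg (x := b i) (y := b j)]
    have hp := hpt (b i) (b j)
    rw [hd2, abs_lt] at hp
    constructor <;> linarith [hp.1, hp.2]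
  -- contradiction with `D` doubling
  obtain ⟨C, hC1, β, hβ, hdoubC⟩ := hDd
  obtain ⟨N, hN⟩ := exists_nat_gt (C * (5/3 : ℝ) ^ β)
  set n := max N 2 with hn
  have h2n : 2 ≤ n := le_max_right _ _
  set F : Finset X := (Finset.range n).image b with hF
  have hcard : F.card = n := by
    rw [hF, Finset.card_image_of_injective _ hbinj, Finset.card_range]
  have hmemF : ∀ i, i < n → b i ∈ F := fun i hi =>
    Finset.mem_image_of_mem b (Finset.mem_range.mpr hi)
  have hFval : ∀ x ∈ F, ∃ i, i < n ∧ b i = x := by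
    intro x hx
    obtain ⟨i, hi, rfl⟩ := Finset.mem_image.mp hx
    exact ⟨i, Finset.mem_range.mp hi, rfl⟩
  have hbdd : ∀ r ∈ {r : ℝ | ∃ x ∈ F, ∃ y ∈ F, D x y = r}, r ≤ 5/2 := by
    rintro r ⟨x, hx, y, hy, rfl⟩
    obtain ⟨i, hi, rfl⟩ := hFval x hx
    obtain ⟨j, hj, rfl⟩ := hFval y hy
    rcases eq_or_ne i j with rfl | hij
    · rw [(hDm.1 _ _).mpr rfl]; norm_num
    · linarith [(hDb i j hij).2]
  have hdiam_le : finsetDiam D F ≤ 5/2 := Real.sSup_le hbdd (by norm_num)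
  have hdiam_nonneg : 0 ≤ finsetDiam D F := by
    apply le_csSup ⟨5/2, hbdd⟩
    exact ⟨b 0, hmemF 0 (by omega), b 0, hmemF 0 (by omega), (hDm.1 _ _).mpr rfl⟩
  have halpha : (3/2:ℝ) ≤ finsetAlpha D F := by
    apply le_csInf
    · refine ⟨D (b 0) (b 1), b 0, hmemF 0 (by omega), b 1, hmemF 1 (by omega), ?_, rfl⟩
      intro h
      exact absurd (hbinj h) (by norm_num)
    · rintro r ⟨x, hx, y, hy, hxy, rfl⟩
      obtain ⟨i, hi, rfl⟩ := hFval x hx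
      obtain ⟨j, hj, rfl⟩ := hFval y hy
      have hij : i ≠ j := fun h => hxy (by rw [h])
      linarith [(hDb i j hij).1]
  have halpha_pos : (0:ℝ) < finsetAlpha D F := by linarith
  have hratio : finsetDiam D F / finsetAlpha D F ≤ 5/3 := by
    calc finsetDiam D F / finsetAlpha D F ≤ (5/2) / (3/2) :=
          div_le_div₀ (by norm_num) hdiam_le (by norm_num) halpha
      _ = 5/3 := by norm_num
  have hkey := hdoubC F (by rw [hcard]; exact h2n)
  rw [hcard] at hkey
  have hfin : (n:ℝ) ≤ C * (5/3:ℝ)^β := by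
    refine le_trans hkey ?_
    have hC0 : (0:ℝ) ≤ C := le_trans zero_le_one hC1
    exact mul_le_mul_of_nonneg_left
      (Real.rpow_le_rpow (div_nonneg hdiam_nonneg halpha_pos.le) hratio hβ.le) hC0
  have hNn : (N:ℝ) ≤ n := Nat.cast_le.mpr (le_max_left _ _)
  linarith
end

section
/- Let S ⊆ [0,∞) with 0 ∈ S be an exponential range set, i.e., there exist a ∈ (0,1) and M ∈ [1,∞) such that [M^{-1}a^n, M a^n] ∩ S ≠ ∅ for all n ≥ 0. Then there exist a' ∈ (0,1), M' ∈ [1,∞), and a strictly decreasing sequence (s(n))_{n≥0} in S with M'^{-1} a'^n ≤ s(n) ≤ M' a'^n for all n ≥ 0. -/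
open Set

/-- An exponential range set `S`: from geometric-scale intervals meeting `S` one can
extract a strictly decreasing geometric-like sequence inside `S`. -/
theorem exponential_rangeSet_sequence (S : Set ℝ) (hS : S ⊆ Set.Ici 0)
    (hS0 : (0 : ℝ) ∈ S)
    (hexp : ∃ a : ℝ, 0 < a ∧ a < 1 ∧ ∃ M : ℝ, 1 ≤ M ∧
      ∀ n : ℕ, ∃ s ∈ S, M⁻¹ * a ^ n ≤ s ∧ s ≤ M * a ^ n) :
    ∃ a' : ℝ, 0 < a' ∧ a' < 1 ∧ ∃ M' : ℝ, 1 ≤ M' ∧ ∃ s : ℕ → ℝ,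
      StrictAnti s ∧ (∀ n, s n ∈ S) ∧
      ∀ n : ℕ, M'⁻¹ * a' ^ n ≤ s n ∧ s n ≤ M' * a' ^ n := by
  obtain ⟨a, ha0, ha1, M, hM, h⟩ := hexp
  have hM0 : (0 : ℝ) < M := lt_of_lt_of_le one_pos hM
  have hMi : (0 : ℝ) < M⁻¹ * M⁻¹ := by positivity
  obtain ⟨k, hk⟩ := exists_pow_lt_of_lt_one hMi ha1
  have hak : (0 : ℝ) < a ^ k := pow_pos ha0 k
  have hak1 : a ^ k < 1 := lt_of_lt_of_le hk (by
    have hi : (0:ℝ) < M⁻¹ := inv_pos.mpr hM0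
    have hc : M * M⁻¹ = 1 := mul_inv_cancel₀ hM0.ne'
    nlinarith)
  refine ⟨a ^ k, hak, hak1, M, hM, fun n => (h (k * n)).choose, ?_, ?_, ?_⟩
  · have key : ∀ n : ℕ, (h (k * (n + 1))).choose < (h (k * n)).choose := by
      intro n
      obtain ⟨_, _, h2⟩ := (h (k * (n + 1))).choose_spec
      obtain ⟨_, h1, _⟩ := (h (k * n)).choose_spec
      have e : a ^ (k * (n + 1)) = a ^ (k * n) * a ^ k := by
        rw [← pow_add]; ring_nf
      calc (h (k * (n + 1))).choose ≤ M * a ^ (k * (n + 1)) := h2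
        _ = M * a ^ (k * n) * a ^ k := by rw [e]; ring
        _ < M * a ^ (k * n) * (M⁻¹ * M⁻¹) := by
            apply mul_lt_mul_of_pos_left hk
            positivity
        _ = M⁻¹ * a ^ (k * n) := by
            rw [show M * a ^ (k * n) * (M⁻¹ * M⁻¹) = (M * M⁻¹) * (M⁻¹ * a ^ (k * n)) by ring,
              mul_inv_cancel₀ hM0.ne', one_mul]
        _ ≤ (h (k * n)).choose := h1
    exact strictAnti_nat_of_succ_lt key
  · intro n; exact (h (k * n)).choose_spec.1
  · intro n
    obtain ⟨_, h1, h2⟩ := (h (k * n)).choose_spec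
    rw [← pow_mul]
    exact ⟨h1, h2⟩
end

section
/- Let s : ℕ → (0,∞) be a strictly decreasing sequence tending to 0 for which there exist a ∈ (0,1) and M ∈ [1,∞) with M^{-1}a^n ≤ s(n) ≤ M a^n for all n. Let d_s be the metric on 2^ω = {0,1}^ℕ defined by d_s(x,y) = s(v(x,y)) for x ≠ y, where v(x,y) = min{n : x(n) ≠ y(n)}, and d_s(x,x)=0. Then (2^ω, d_s) is uniformly perfect; indeed it is (M^{-2}a)-uniformly perfect. -/
open Set Filter Classical
noncomputable section

/-- The first index at which two binary sequences differ. -/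
noncomputable def firstDiff (x y : ℕ → Bool) : ℕ :=
  sInf {n : ℕ | x n ≠ y n}

/-- The sequentially metrized Cantor space metric `d_s` on `2^ω`. -/
noncomputable def seqMetric (s : ℕ → ℝ) (x y : ℕ → Bool) : ℝ :=
  if x = y then 0 else s (firstDiff x y)

/-- Diameter of `2^ω` with respect to `d_s`. -/
noncomputable def seqDiam (s : ℕ → ℝ) : ℝ :=
  sSup {r : ℝ | ∃ x y : ℕ → Bool, seqMetric s x y = r}

/-- If `M⁻¹ aⁿ ≤ s n ≤ M aⁿ` for a strictly decreasing null sequence `s`, then the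
sequentially metrized Cantor space `(2^ω, d_s)` is `(M⁻² a)`-uniformly perfect. -/
theorem seqCantor_uniformlyPerfect (s : ℕ → ℝ) (hpos : ∀ n, 0 < s n)
    (hanti : StrictAnti s) (hlim : Tendsto s atTop (nhds 0))
    (a : ℝ) (ha0 : 0 < a) (ha1 : a < 1) (M : ℝ) (hM : 1 ≤ M)
    (hbound : ∀ n : ℕ, M⁻¹ * a ^ n ≤ s n ∧ s n ≤ M * a ^ n) :
    ∀ x : ℕ → Bool, ∀ r : ℝ, 0 < r → r < seqDiam s →
      ∃ y : ℕ → Bool, (M ^ 2)⁻¹ * a * r ≤ seqMetric s x y ∧ seqMetric s x y ≤ r := by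
  intro x r hr hrd
  -- seqDiam ≤ s 0
  have hdle : seqDiam s ≤ s 0 := by
    apply Real.sSup_le
    · rintro t ⟨u, v, rfl⟩
      unfold seqMetric
      split
      · exact (hpos 0).le
      · exact hanti.antitone (Nat.zero_le _)
    · exact (hpos 0).le
  have hr0 : r < s 0 := lt_of_lt_of_le hrd hdle
  -- choose n minimal with s n ≤ r
  have hne : {m : ℕ | s m ≤ r}.Nonempty := by
    obtain ⟨m, hm⟩ := (hlim.eventually_lt_const hr).exists
    exact ⟨m, hm.le⟩
  set n := sInf {m : ℕ | s m ≤ r} with hn_def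
  have hn : s n ≤ r := Nat.sInf_mem hne
  have hn0 : n ≠ 0 := by
    intro h
    rw [h] at hn
    exact absurd hn (not_le.2 hr0)
  obtain ⟨k, hk⟩ := Nat.exists_eq_succ_of_ne_zero hn0
  have hk_not : ¬ s k ≤ r := Nat.notMem_of_lt_sInf (show k < sInf {m : ℕ | s m ≤ r} from by rw [← hn_def]; omega)
  have hkr : r < s k := not_le.1 hk_not
  -- define y flipping x at n
  set y : ℕ → Bool := Function.update x n (!x n) with hy_def
  have hxy : x ≠ y := by
    intro h
    have : x n = y n := by rw [h]
    simp [hy_def, Function.update_self] at this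
  have hdiffset : {m : ℕ | x m ≠ y m} = {n} := by
    ext m
    simp only [Set.mem_setOf_eq, Set.mem_singleton_iff, hy_def]
    constructor
    · intro h
      by_contra hmn
      rw [Function.update_of_ne hmn] at h
      exact h rfl
    · rintro rfl
      simp
  have hfd : firstDiff x y = n := by
    rw [firstDiff, hdiffset, csInf_singleton]
  have hmet : seqMetric s x y = s n := by
    rw [seqMetric, if_neg hxy, hfd]
  refine ⟨y, ?_, by rw [hmet]; exact hn⟩
  rw [hmet]
  have hM0 : 0 < M := lt_of_lt_of_le one_pos hM
  have h1 : s k ≤ M * a ^ k := (hbound k).2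
  have h2 : M⁻¹ * a ^ n ≤ s n := (hbound n).1
  have hran : r < M * a ^ k := lt_of_lt_of_le hkr h1
  have han : a ^ n = a * a ^ k := by rw [hk, pow_succ]; ring
  have key : (M ^ 2)⁻¹ * a * r ≤ M⁻¹ * a ^ n := by
    rw [han]
    have : (M ^ 2)⁻¹ * a * r ≤ (M ^ 2)⁻¹ * a * (M * a ^ k) := by
      apply mul_le_mul_of_nonneg_left hran.le
      positivity
    calc (M ^ 2)⁻¹ * a * r ≤ (M ^ 2)⁻¹ * a * (M * a ^ k) := this
      _ = M⁻¹ * (a * a ^ k) := by field_simp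
  linarith
end
end

section
/- Let S be a range set with countable coinitiality (there is a strictly decreasing sequence in S converging to 0) and let X be an ultrametrizable topological space. If the set of doubling metrics in Ult(X,S) is dense in (Ult(X,S), 𝒰𝒟_X^S), then X is compact. -/
open Set Topology Filter ENNReal

/-- Membership in `Ult(X,S)`: `d` is an `S`-valued ultrametric generating the
topology of `X`. -/
def MemUlt {X : Type*} [TopologicalSpace X] (S : Set ℝ) (d : X → X → ℝ) : Prop :=
  IsUltrametricOn d ∧ (∀ x y, d x y ∈ S) ∧ GeneratesTopology d

/-- The ultrametric `𝒰𝒟_X^S(d,e)`: the infimum of `ε ∈ S ∪ {∞}` such that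
`d ≤ max (e, ε)` and `e ≤ max (d, ε)` pointwise. -/
noncomputable def UDdist {X : Type*} (S : Set ℝ) (d e : X → X → ℝ) : ℝ≥0∞ :=
  sInf ({⊤} ∪ ENNReal.ofReal '' {ε : ℝ | ε ∈ S ∧
    ∀ x y, d x y ≤ max (e x y) ε ∧ e x y ≤ max (d x y) ε})

lemma ultra_nonneg' {X : Type*} {d : X → X → ℝ} (h : IsUltrametricOn d) (x y : X) :
    0 ≤ d x y := by
  have h0 : d x x = 0 := (h.1 x x).2 rfl
  have ht := h.2.2 x x y
  rw [h0, h.2.1 y x] at ht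
  simpa using ht

open Classical in
noncomputable def quant (s : ℕ → ℝ) (t : ℝ) : ℝ :=
  if h : ∃ n, s n < t then s (Nat.find h - 1) else 0

section quantsec
variable {s : ℕ → ℝ}

lemma quant_mem (t : ℝ) : quant s t = 0 ∨ ∃ n, quant s t = s n := by
  unfold quant; split_ifs with h
  · exact Or.inr ⟨_, rfl⟩
  · exact Or.inl rfl

lemma quant_nonneg (hp : ∀ n, 0 < s n) (t : ℝ) : 0 ≤ quant s t := by
  rcases quant_mem (s := s) t with h | ⟨n, h⟩ <;> rw [h]
  · exact (hp n).le

lemma quant_le_s0 (hsa : StrictAnti s) (hp : ∀ n, 0 < s n) (t : ℝ) : quant s t ≤ s 0 := by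
  unfold quant; split_ifs with h
  · exact hsa.antitone (Nat.zero_le _)
  · exact (hp 0).le

lemma quant_eq_zero_iff (hp : ∀ n, 0 < s n) (hlim : Tendsto s atTop (𝓝 0)) (t : ℝ) :
    quant s t = 0 ↔ t ≤ 0 := by
  unfold quant; split_ifs with h
  · obtain ⟨n, hn⟩ := h
    constructor
    · intro h0; exact absurd h0 (ne_of_gt (hp _))
    · intro ht; exact absurd (lt_of_lt_of_le hn ht) (not_lt.mpr (hp n).le)
  · constructor
    · intro _
      by_contra ht
      push_neg at ht
      exact h ((hlim.eventually_lt_const ht).exists)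
    · intro _; rfl

lemma quant_ge (hlim : Tendsto s atTop (𝓝 0)) {t : ℝ} (h1 : 0 < t) (h2 : t ≤ s 0) :
    t ≤ quant s t := by
  have he : ∃ n, s n < t := (hlim.eventually_lt_const h1).exists
  unfold quant; rw [dif_pos he]
  have h0 : Nat.find he ≠ 0 := by
    intro h0
    have := Nat.find_spec he
    rw [h0] at this
    exact absurd h2 (not_le.mpr this)
  exact le_of_not_gt (Nat.find_min he (by omega))

lemma quant_gt_s0 {t : ℝ} (h : s 0 < t) : quant s t = s 0 := by
  have he : ∃ n, s n < t := ⟨0, h⟩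
  unfold quant; rw [dif_pos he, (Nat.find_eq_zero he).mpr h]

lemma quant_mono (hsa : StrictAnti s) (hp : ∀ n, 0 < s n) : Monotone (quant s) := by
  intro a b hab
  unfold quant
  split_ifs with ha hb hb
  · exact hsa.antitone (Nat.sub_le_sub_right
      (Nat.find_mono (fun n hn => lt_of_lt_of_le hn hab)) 1)
  · exact absurd (ha.imp fun n hn => lt_of_lt_of_le hn hab) hb
  · exact (hp _).le
  · exact le_refl 0

lemma quant_le_of_lt (hsa : StrictAnti s) (hp : ∀ n, 0 < s n) (m : ℕ) {t : ℝ}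
    (h : t < s (m + 1)) : quant s t ≤ s (m + 1) := by
  unfold quant; split_ifs with he
  · have h2 : m + 1 < Nat.find he := hsa.lt_iff_gt.mp (lt_trans (Nat.find_spec he) h)
    exact hsa.antitone (by omega)
  · exact (hp _).le

end quantsec

/-- If `S` has countable coinitiality, `X` is ultrametrizable and the doubling
ultrametrics are dense in `(Ult(X,S), 𝒰𝒟_X^S)`, then `X` is compact. -/
theorem compact_of_dense_doubling_ultrametrics {X : Type*} [TopologicalSpace X]
    (S : Set ℝ) (hSsub : S ⊆ Set.Ici 0) (hS0 : (0 : ℝ) ∈ S)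
    (hco : ∃ s : ℕ → ℝ, StrictAnti s ∧ (∀ n, s n ∈ S) ∧ Tendsto s atTop (nhds 0))
    (hultra : ∃ ρ : X → X → ℝ, IsUltrametricOn ρ ∧ GeneratesTopology ρ)
    (hdense : ∀ d : X → X → ℝ, MemUlt S d → ∀ ε : ℝ≥0∞, 0 < ε →
      ∃ D : X → X → ℝ, MemUlt S D ∧ Doubling D ∧ UDdist S d D < ε) :
    CompactSpace X := by
  classical
  obtain ⟨ρ, hρu, hρg⟩ := hultra
  obtain ⟨s, hsa, hsS, hlim⟩ := hco
  have hp : ∀ n, 0 < s n := by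
    intro n
    have h1 : 0 ≤ s (n + 1) :=
      le_of_tendsto hlim (Filter.eventually_atTop.mpr ⟨n + 1, fun m hm => hsa.antitone hm⟩)
    exact h1.trans_lt (hsa (Nat.lt_succ_self n))
  have hexlt : ∀ t : ℝ, 0 < t → ∃ n, s n < t := fun t ht =>
    (hlim.eventually_lt_const ht).exists
  set d0 : X → X → ℝ := fun a b => quant s (ρ a b) with hd0
  have hρ0 : ∀ a b, 0 ≤ ρ a b := ultra_nonneg' hρu
  have hd0u : IsUltrametricOn d0 := by
    refine ⟨?_, ?_, ?_⟩
    · intro a b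
      constructor
      · intro h
        exact (hρu.1 a b).mp
          (le_antisymm ((quant_eq_zero_iff hp hlim _).mp h) (hρ0 a b))
      · intro h
        have : ρ a b = 0 := (hρu.1 a b).mpr h
        simp only [hd0, this]
        exact (quant_eq_zero_iff hp hlim _).mpr (le_refl 0)
    · intro a b; simp only [hd0, hρu.2.1 a b]
    · intro a b z
      have h1 := hρu.2.2 a b z
      calc d0 a b = quant s (ρ a b) := rfl
        _ ≤ quant s (max (ρ a z) (ρ z b)) := quant_mono hsa hp h1
        _ = max (quant s (ρ a z)) (quant s (ρ z b)) := (quant_mono hsa hp).map_max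
  have hd0S : ∀ a b, d0 a b ∈ S := by
    intro a b
    rcases quant_mem (s := s) (ρ a b) with h | ⟨n, h⟩
    · show quant s (ρ a b) ∈ S; rw [h]; exact hS0
    · show quant s (ρ a b) ∈ S; rw [h]; exact hsS n
  have hd0le : ∀ a b, d0 a b ≤ s 0 := fun a b => quant_le_s0 hsa hp _
  have hd0g : GeneratesTopology d0 := by
    intro t
    rw [hρg t]
    constructor
    · intro h x hx
      obtain ⟨ε, hε, hb⟩ := h x hx
      refine ⟨min ε (s 0), lt_min hε (hp 0), fun y hy => ?_⟩
      apply hb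
      rcases (hρ0 x y).eq_or_lt with he | hρpos
      · rw [← he]; exact hε
      rcases le_or_gt (ρ x y) (s 0) with hle | hgt
      · exact lt_of_le_of_lt (quant_ge hlim hρpos hle)
          (lt_of_lt_of_le hy (min_le_left _ _))
      · exfalso
        have hq : d0 x y = s 0 := quant_gt_s0 hgt
        rw [hq] at hy
        exact absurd (lt_of_lt_of_le hy (min_le_right _ _)) (lt_irrefl _)
    · intro h x hx
      obtain ⟨ε, hε, hb⟩ := h x hx
      obtain ⟨m, hm⟩ := hexlt ε hε
      refine ⟨s (m + 1), hp _, fun y hy => ?_⟩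
      apply hb
      exact lt_of_le_of_lt (quant_le_of_lt hsa hp m hy)
        (lt_trans (hsa (Nat.lt_succ_self m)) hm)
  letI M : MetricSpace X := MetricSpace.ofDistTopology d0
    (fun a => (hd0u.1 a a).mpr rfl)
    hd0u.2.1
    (fun a b c => le_trans (hd0u.2.2 a c b)
      (max_le (le_add_of_nonneg_right (quant_nonneg hp _))
        (le_add_of_nonneg_left (quant_nonneg hp _))))
    hd0g
    (fun a b h => (hd0u.1 a b).mp h)
  have hdist : ∀ a b : X, dist a b = d0 a b := fun a b => rfl
  refine ⟨IsSeqCompact.isCompact ?_⟩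
  intro u hu
  by_contra hno
  push_neg at hno
  have hnc : ∀ z : X, ¬ MapClusterPt z atTop u := by
    intro z hz
    obtain ⟨ψ, hψ, hψt⟩ := TopologicalSpace.FirstCountableTopology.tendsto_subseq hz
    exact hno z (Set.mem_univ z) ψ hψ hψt
  have hLF : ∀ z : X, ∃ ε > 0, ∃ N : ℕ, ∀ k, d0 z (u k) < ε → k < N := by
    intro z
    have h := hnc z
    rw [mapClusterPt_iff_frequently] at h
    push_neg at h
    obtain ⟨V, hV, hVf⟩ := h
    obtain ⟨N, hN⟩ := Filter.eventually_atTop.mp hVf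
    obtain ⟨ε, hε, hball⟩ := Metric.mem_nhds_iff.mp hV
    refine ⟨ε, hε, N, fun k hk => ?_⟩
    by_contra hkN
    push_neg at hkN
    refine hN k hkN (hball ?_)
    rw [Metric.mem_ball, hdist, hd0u.2.1]
    exact hk
  have hrange : (Set.range u).Infinite := by
    intro hfin
    have huniv : (Set.univ : Set ℕ).Finite := by
      have hsub : (Set.univ : Set ℕ) ⊆ ⋃ y ∈ Set.range u, {k | u k = y} := fun k _ =>
        Set.mem_biUnion ⟨k, rfl⟩ rfl
      refine Set.Finite.subset (Set.Finite.biUnion hfin fun y _ => ?_) hsub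
      obtain ⟨ε, hε, N, hN⟩ := hLF y
      refine Set.Finite.subset (Set.finite_Iio N) fun k hk => hN k ?_
      rw [Set.mem_setOf_eq] at hk
      rw [hk, (hd0u.1 y y).mpr rfl]
      exact hε
    exact Set.infinite_univ huniv
  obtain ⟨x, hxinj, hxmem⟩ : ∃ x : ℕ → X, Function.Injective x ∧ ∀ n, x n ∈ Set.range u := by
    refine ⟨fun n => (Set.Infinite.natEmbedding _ hrange n : X), ?_, ?_⟩
    · intro a b hab
      exact (Set.Infinite.natEmbedding _ hrange).injective (Subtype.coe_injective hab)
    · intro n; exact (Set.Infinite.natEmbedding _ hrange n).2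
  have hdisc : ∀ z : X, ∃ δ > 0, ∀ j, d0 z (x j) < δ → x j = z := by
    intro z
    obtain ⟨ε, hε, N, hN⟩ := hLF z
    have hFfin : (u '' Set.Iio N).Finite := (Set.finite_Iio N).image u
    set F := hFfin.toFinset with hF
    set G := insert ε ((F.filter (fun y => y ≠ z)).image (fun y => d0 z y)) with hG
    have hGne : G.Nonempty := ⟨ε, Finset.mem_insert_self _ _⟩
    have hposG : ∀ rr ∈ G, 0 < rr := by
      intro rr hr
      rcases Finset.mem_insert.mp hr with h1 | h1
      · rw [h1]; exact hε
      · obtain ⟨y, hy, hyr⟩ := Finset.mem_image.mp h1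
        obtain ⟨hyF, hyz⟩ := Finset.mem_filter.mp hy
        rw [← hyr]
        refine lt_of_le_of_ne (quant_nonneg hp _) ?_
        intro h0
        exact hyz ((hd0u.1 z y).mp h0.symm).symm
    refine ⟨G.min' hGne, hposG _ (G.min'_mem hGne), fun j hj => ?_⟩
    by_contra hne
    have hδε : G.min' hGne ≤ ε := G.min'_le ε (Finset.mem_insert_self _ _)
    obtain ⟨k, hk⟩ := hxmem j
    have hkN : k < N := hN k (by rw [hk]; exact lt_of_lt_of_le hj hδε)
    have hxF : x j ∈ F := hFfin.mem_toFinset.mpr ⟨k, hkN, hk⟩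
    have hmemG : d0 z (x j) ∈ G := Finset.mem_insert_of_mem
      (Finset.mem_image.mpr ⟨x j, Finset.mem_filter.mpr ⟨hxF, hne⟩, rfl⟩)
    exact absurd hj (not_lt.mpr (G.min'_le _ hmemG))
  have hm' : ∀ i : ℕ, ∃ mi : ℕ, i + 1 ≤ mi ∧ ∀ j, d0 (x i) (x j) ≤ s mi → j = i := by
    intro i
    obtain ⟨δ, hδ, hδ'⟩ := hdisc (x i)
    obtain ⟨Mi, hMi⟩ := hexlt δ hδ
    refine ⟨max Mi (i + 1), le_max_right _ _, fun j hj => ?_⟩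
    have : d0 (x i) (x j) < δ :=
      lt_of_le_of_lt (hj.trans (hsa.antitone (le_max_left Mi (i + 1)))) hMi
    exact hxinj (hδ' j this)
  choose m hm1 hm2 using hm'
  set r : ℕ → ℝ := fun i => s (m i) with hr
  have hxB : ∀ i, d0 (x i) (x i) ≤ r i := fun i => by
    rw [(hd0u.1 _ _).mpr rfl]; exact (hp _).le
  have huniq : ∀ y i j, d0 (x i) y ≤ r i → d0 (x j) y ≤ r j → i = j := by
    intro y i j hi hj
    have hij : d0 (x i) (x j) ≤ max (r i) (r j) := by
      refine le_trans (hd0u.2.2 (x i) (x j) y) (max_le_max hi ?_)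
      rw [hd0u.2.1]; exact hj
    rcases le_total (r i) (r j) with h | h
    · have hji : d0 (x j) (x i) ≤ r j := by
        rw [hd0u.2.1]; exact hij.trans (max_le h (le_refl _))
      exact hm2 j i hji
    · have hii : d0 (x i) (x j) ≤ r i := hij.trans (max_le (le_refl _) h)
      exact (hm2 i j hii).symm
  set c : X → Option ℕ := fun y => if h : ∃ i, d0 (x i) y ≤ r i then some h.choose else none
    with hc
  have hcB : ∀ y i, d0 (x i) y ≤ r i → c y = some i := by
    intro y i hyi
    have h : ∃ k, d0 (x k) y ≤ r k := ⟨i, hyi⟩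
    simp only [hc, dif_pos h]
    exact congrArg some (huniq y _ _ h.choose_spec hyi)
  have hcn : ∀ y, (∀ i, ¬ d0 (x i) y ≤ r i) → c y = none := by
    intro y hy
    simp only [hc]
    rw [dif_neg (not_exists.mpr hy)]
  have hc_loc : ∀ z, ∃ ε > 0, ∀ y, d0 z y < ε → c y = c z := by
    intro z
    by_cases h : ∃ i, d0 (x i) z ≤ r i
    · obtain ⟨i, hi⟩ := h
      refine ⟨r i, hp _, fun y hy => ?_⟩
      have hyB : d0 (x i) y ≤ r i :=
        le_trans (hd0u.2.2 (x i) y z) (max_le hi hy.le)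
      rw [hcB y i hyB, hcB z i hi]
    · push_neg at h
      have hzx : ∀ j, z ≠ x j := by
        intro j hz
        have hj := h j
        rw [hz, (hd0u.1 (x j) (x j)).mpr rfl] at hj
        exact absurd hj (not_lt.mpr (hp _).le)
      obtain ⟨δ, hδ, hδ'⟩ := hdisc z
      have hδx : ∀ j, δ ≤ d0 z (x j) := fun j =>
        le_of_not_gt fun hlt => hzx j ((hδ' j hlt).symm)
      obtain ⟨M, hM⟩ := hexlt δ hδ
      set H : Finset ℝ := insert (s (M + 1)) ((Finset.range M).image (fun i => d0 z (x i)))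
        with hH
      have hHne : H.Nonempty := ⟨_, Finset.mem_insert_self _ _⟩
      have hεpos : 0 < H.min' hHne := by
        rcases Finset.mem_insert.mp (H.min'_mem hHne) with h1 | h1
        · rw [h1]; exact hp _
        · obtain ⟨i, _, hi⟩ := Finset.mem_image.mp h1
          rw [← hi]; exact lt_of_lt_of_le hδ (hδx i)
      refine ⟨H.min' hHne, hεpos, fun y hy => ?_⟩
      have hyB : ∀ i, ¬ d0 (x i) y ≤ r i := by
        intro i hiB
        rcases le_or_gt (r i) (s (M + 1)) with hri | hri
        · have h1 : d0 z y ≤ s (M + 1) :=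
            (lt_of_lt_of_le hy (H.min'_le _ (Finset.mem_insert_self _ _))).le
          have h2 : d0 z (x i) ≤ s (M + 1) := by
            refine le_trans (hd0u.2.2 z (x i) y) (max_le h1 ?_)
            rw [hd0u.2.1]; exact hiB.trans hri
          have h3 : d0 z (x i) < δ :=
            lt_of_le_of_lt h2 (lt_trans (hsa (Nat.lt_succ_self M)) hM)
          exact hzx i ((hδ' i h3).symm)
        · have hiM : i < M := by
            have h1 : r i ≤ s (i + 1) := hsa.antitone (hm1 i)
            have h2 : i + 1 < M + 1 := hsa.lt_iff_gt.mp (lt_of_lt_of_le hri h1)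
            omega
          have hmemH : d0 z (x i) ∈ H := Finset.mem_insert_of_mem
            (Finset.mem_image_of_mem _ (Finset.mem_range.mpr hiM))
          have hriz : r i < d0 z (x i) := by
            rw [hd0u.2.1 z (x i)]; exact h i
          have hcon : d0 z (x i) < d0 z (x i) := by
            refine lt_of_le_of_lt (hd0u.2.2 z (x i) y) (max_lt ?_ ?_)
            · exact lt_of_lt_of_le hy (H.min'_le _ hmemH)
            · rw [hd0u.2.1]; exact lt_of_le_of_lt hiB hriz
          exact absurd hcon (lt_irrefl _)
      rw [hcn y hyB, hcn z (fun i => not_le.mpr (h i))]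
  set dd : X → X → ℝ := fun a b => if c a = c b then d0 a b else s 0 with hdd
  have hdd_eval : ∀ a b, dd a b = if c a = c b then d0 a b else s 0 := fun a b => by
    simp only [hdd]
  have hddle : ∀ a b, d0 a b ≤ dd a b := by
    intro a b
    rw [hdd_eval]
    split_ifs with h1
    · exact le_refl _
    · exact hd0le a b
  have hddu : IsUltrametricOn dd := by
    refine ⟨?_, ?_, ?_⟩
    · intro a b
      rw [hdd_eval]
      split_ifs with hcc
      · exact hd0u.1 a b
      · constructor
        · intro h0; exact absurd h0 (ne_of_gt (hp 0))
        · intro hab; exact absurd (hab ▸ rfl) hcc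
    · intro a b
      rw [hdd_eval, hdd_eval]
      by_cases hcc : c a = c b
      · rw [if_pos hcc, if_pos hcc.symm, hd0u.2.1]
      · rw [if_neg hcc, if_neg (fun hh => hcc hh.symm)]
    · intro a b z
      rw [hdd_eval a b]
      split_ifs with hcc
      · exact le_trans (hd0u.2.2 a b z) (max_le_max (hddle a z) (hddle z b))
      · by_cases h1 : c a = c z
        · have h2 : ¬ c z = c b := fun hh => hcc (h1.trans hh)
          have hz : dd z b = s 0 := by rw [hdd_eval, if_neg h2]
          exact le_max_of_le_right hz.symm.le
        · have hz : dd a z = s 0 := by rw [hdd_eval, if_neg h1]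
          exact le_max_of_le_left hz.symm.le
  have hddS : ∀ a b, dd a b ∈ S := by
    intro a b
    rw [hdd_eval]
    split_ifs with h1
    · exact hd0S a b
    · exact hsS 0
  have hddg : GeneratesTopology dd := by
    intro t
    rw [hd0g t]
    constructor
    · intro h x hx
      obtain ⟨ε, hε, hb⟩ := h x hx
      exact ⟨ε, hε, fun y hy => hb y (lt_of_le_of_lt (hddle x y) hy)⟩
    · intro h x hx
      obtain ⟨ε, hε, hb⟩ := h x hx
      obtain ⟨ε', hε', hcl⟩ := hc_loc x
      refine ⟨min ε ε', lt_min hε hε', fun y hy => ?_⟩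
      apply hb
      have hcy : c y = c x := hcl y (lt_of_lt_of_le hy (min_le_right _ _))
      rw [hdd_eval, if_pos hcy.symm]
      exact lt_of_lt_of_le hy (min_le_left _ _)
  obtain ⟨D, hD, hDd, hUD⟩ := hdense dd ⟨hddu, hddS, hddg⟩
    (ENNReal.ofReal (s 1)) (ENNReal.ofReal_pos.mpr (hp 1))
  unfold UDdist at hUD
  obtain ⟨b, hb, hblt⟩ := sInf_lt_iff.mp hUD
  rcases hb with hb | ⟨ε, hεmem, hbe⟩
  · rw [Set.mem_singleton_iff] at hb
    rw [hb] at hblt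
    exact absurd hblt not_top_lt
  · obtain ⟨hεS, hεprop⟩ := hεmem
    rw [← hbe] at hblt
    have hε1 : ε < s 1 := (ENNReal.ofReal_lt_ofReal_iff (hp 1)).mp hblt
    have hε0 : ε < s 0 := hε1.trans (hsa Nat.zero_lt_one)
    have hDval : ∀ i j, i ≠ j → D (x i) (x j) = s 0 := by
      intro i j hij
      have hddv : dd (x i) (x j) = s 0 := by
        rw [hdd_eval, hcB (x i) i (hxB i), hcB (x j) j (hxB j),
          if_neg (fun hh => hij (Option.some_injective _ hh))]
      obtain ⟨h1, h2⟩ := hεprop (x i) (x j)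
      rw [hddv] at h1 h2
      have hD1 : s 0 ≤ D (x i) (x j) := by
        by_contra hlt
        push_neg at hlt
        exact absurd h1 (not_le.mpr (max_lt hlt hε0))
      rw [max_eq_left hε0.le] at h2
      exact le_antisymm h2 hD1
    obtain ⟨C, hC1, β, hβ, hdoub⟩ := hDd
    set F : Finset X := (Finset.range (⌈C⌉₊ + 2)).image x with hF
    have hFcard : F.card = ⌈C⌉₊ + 2 := by
      rw [hF, Finset.card_image_of_injective _ hxinj, Finset.card_range]
    have hmem0 : x 0 ∈ F := Finset.mem_image_of_mem x (Finset.mem_range.mpr (by omega))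
    have hmem1 : x 1 ∈ F := Finset.mem_image_of_mem x (Finset.mem_range.mpr (by omega))
    have hD00 : ∀ a, D a a = 0 := fun a => (hD.1.1 a a).mpr rfl
    have hdiam : finsetDiam D F = s 0 := by
      have hset : {rr : ℝ | ∃ a ∈ F, ∃ b ∈ F, D a b = rr} = {0, s 0} := by
        ext rr
        simp only [Set.mem_setOf_eq, Set.mem_insert_iff, Set.mem_singleton_iff]
        constructor
        · rintro ⟨a, ha, b, hbm, hab⟩
          obtain ⟨i, _, hi⟩ := Finset.mem_image.mp ha
          obtain ⟨j, _, hjj⟩ := Finset.mem_image.mp hbm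
          by_cases hij : i = j
          · left; rw [← hab, ← hi, ← hjj, hij, hD00]
          · right; rw [← hab, ← hi, ← hjj, hDval i j hij]
        · rintro (rfl | rfl)
          · exact ⟨x 0, hmem0, x 0, hmem0, hD00 _⟩
          · exact ⟨x 0, hmem0, x 1, hmem1, hDval 0 1 (by norm_num)⟩
      unfold finsetDiam
      rw [hset, csSup_pair]
      exact sup_eq_right.mpr (hp 0).le
    have halpha : finsetAlpha D F = s 0 := by
      have hset : {rr : ℝ | ∃ a ∈ F, ∃ b ∈ F, a ≠ b ∧ D a b = rr} = {s 0} := by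
        ext rr
        simp only [Set.mem_setOf_eq, Set.mem_singleton_iff]
        constructor
        · rintro ⟨a, ha, b, hbm, hab, habd⟩
          obtain ⟨i, _, hi⟩ := Finset.mem_image.mp ha
          obtain ⟨j, _, hjj⟩ := Finset.mem_image.mp hbm
          have hij : i ≠ j := fun hh => hab (by rw [← hi, ← hjj, hh])
          rw [← habd, ← hi, ← hjj, hDval i j hij]
        · rintro rfl
          exact ⟨x 0, hmem0, x 1, hmem1,
            fun hh => (by norm_num : (0 : ℕ) ≠ 1) (hxinj hh), hDval 0 1 (by norm_num)⟩
      unfold finsetAlpha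
      rw [hset, csInf_singleton]
    have hcard2 : 2 ≤ F.card := by rw [hFcard]; omega
    have hfin := hdoub F hcard2
    rw [hdiam, halpha, div_self (ne_of_gt (hp 0)), Real.one_rpow, mul_one, hFcard] at hfin
    have hCle : C ≤ (⌈C⌉₊ : ℝ) := Nat.le_ceil C
    push_cast at hfin
    linarith
end

section
/- Let X be a compact ultrametrizable space and S a range set with countable coinitiality. Then for every d ∈ Ult(X,S) and every ε > 0 in S, there exists a doubling D ∈ Ult(X,S) with 𝒰𝒟_X^S(D,d) ≤ ε. Hence the set of doubling S-valued ultrametrics is dense in (Ult(X,S), 𝒰𝒟_X^S). -/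
open Set Topology Filter ENNReal

namespace DDenseAux

variable {X : Type*}

def U (d : X → X → ℝ) (t : ℕ → ℝ) (L : ℕ → List X) (n : ℕ) : Set X :=
  { y | ∃ c, (L n.unpair.1)[n.unpair.2]? = some c ∧ d c y ≤ t n.unpair.1 }

noncomputable def n0 (d : X → X → ℝ) (t : ℕ → ℝ) (L : ℕ → List X) (x y : X) : ℕ :=
  sInf {n | ¬ (x ∈ U d t L n ↔ y ∈ U d t L n)}

open Classical in
noncomputable def DD (d : X → X → ℝ) (ε : ℝ) (t : ℕ → ℝ) (L : ℕ → List X)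
    (x y : X) : ℝ :=
  if x = y then 0 else if d x y ≤ ε then t (n0 d t L x y) else d x y

section

variable (d : X → X → ℝ) (ε : ℝ) (t : ℕ → ℝ) (L : ℕ → List X)
variable (hmet : IsUltrametricOn d) (hεpos : 0 < ε)
variable (htpos : ∀ k, 0 < t k) (hthalf : ∀ k, 2 * t (k+1) ≤ t k) (htε : 2 * t 0 ≤ ε)
variable (hcov : ∀ k x, ∃ c ∈ L k, d c x ≤ t k)

include hmet in
lemma d_nonneg : ∀ x y : X, 0 ≤ d x y := by
  intro x y
  have h : d x x ≤ max (d x y) (d y x) := hmet.2.2 x x y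
  rw [(hmet.1 x x).mpr rfl, hmet.2.1 y x] at h
  simpa using h

include hmet in
lemma d_pos {x y : X} (hxy : x ≠ y) : 0 < d x y :=
  lt_of_le_of_ne (d_nonneg d hmet x y) fun h => hxy ((hmet.1 x y).mp h.symm)

include htpos hthalf in
lemma t_anti : StrictAnti t := by
  apply strictAnti_nat_of_succ_lt
  intro n
  have h1 := hthalf n
  have h2 := htpos (n+1)
  linarith

include htpos hthalf in
lemma t_pow_le : ∀ a b : ℕ, t (a + b) * 2 ^ b ≤ t a := by
  intro a b
  induction b with
  | zero => simp
  | succ b ih =>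
      have h1 := hthalf (a + b)
      have h2 := htpos (a + b + 1)
      have h3 : (0:ℝ) < 2 ^ b := by positivity
      calc t (a + (b+1)) * 2 ^ (b+1) = (2 * t (a + b + 1)) * 2 ^ b := by ring_nf
        _ ≤ t (a + b) * 2 ^ b := by nlinarith
        _ ≤ t a := ih

include htpos hthalf in
lemma t_small : ∀ c : ℝ, 0 < c → ∃ k, t k < c := by
  intro c hc
  obtain ⟨n, hn⟩ := exists_nat_gt (t 0 / c)
  refine ⟨n, ?_⟩
  have h2 : (n : ℝ) < 2 ^ n := by
    have := @Nat.lt_two_pow_self n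
    calc (n:ℝ) < ((2^n : ℕ) : ℝ) := by exact_mod_cast this
      _ = 2 ^ n := by push_cast; ring
  have h3 : t 0 / c < 2 ^ n := lt_trans hn h2
  have h4 : t (0 + n) * 2 ^ n ≤ t 0 := t_pow_le t htpos hthalf 0 n
  have h5 : (0:ℝ) < 2 ^ n := by positivity
  have h7 : t 0 < 2 ^ n * c := by
    rw [div_lt_iff₀ hc] at h3; linarith
  rw [zero_add] at h4
  nlinarith

include hmet hcov in
lemma center_sep (k : ℕ) (x : X) :
    ∃ n : ℕ, n.unpair.1 = k ∧ x ∈ U d t L n ∧ ∀ y, t k < d x y → y ∉ U d t L n := by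
  obtain ⟨c, hcL, hdc⟩ := hcov k x
  obtain ⟨i, hi⟩ := List.get_of_mem hcL
  have hget : (L k)[i.1]? = some c := by rw [List.getElem?_eq_getElem i.2]; exact congrArg some hi
  refine ⟨Nat.pair k i, by simp [Nat.unpair_pair], ?_, ?_⟩
  · exact ⟨c, by simpa [Nat.unpair_pair] using hget, by simpa [Nat.unpair_pair] using hdc⟩
  · intro y hy hyU
    obtain ⟨c', hc', hdy⟩ := hyU
    simp only [Nat.unpair_pair] at hc' hdy
    rw [hget] at hc'
    obtain rfl : c = c' := by injection hc'
    have h1 : d x y ≤ max (d x c) (d c y) := hmet.2.2 x y c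
    have h2 : d x c = d c x := hmet.2.1 _ _
    have := max_le (h2 ▸ hdc) hdy
    exact absurd (le_trans h1 this) (not_le.mpr hy)

include hmet htpos hthalf hcov in
lemma diffset_nonempty {x y : X} (hxy : x ≠ y) :
    {n | ¬ (x ∈ U d t L n ↔ y ∈ U d t L n)}.Nonempty := by
  obtain ⟨k, hk⟩ := t_small t htpos hthalf (d x y) (d_pos d hmet hxy)
  obtain ⟨n, -, hxU, hyU⟩ := center_sep d t L hmet hcov k x
  exact ⟨n, fun h => hyU y hk (h.mp hxU)⟩

include hmet htpos hthalf hcov in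
lemma n0_mem {x y : X} (hxy : x ≠ y) :
    ¬ (x ∈ U d t L (n0 d t L x y) ↔ y ∈ U d t L (n0 d t L x y)) :=
  Nat.sInf_mem (diffset_nonempty d t L hmet htpos hthalf hcov hxy)

lemma n0_min {x y : X} {m : ℕ} (hm : m < n0 d t L x y) :
    (x ∈ U d t L m ↔ y ∈ U d t L m) := by
  by_contra h
  exact absurd (Nat.sInf_le h) (not_le.mpr hm)

lemma n0_symm (x y : X) : n0 d t L x y = n0 d t L y x := by
  unfold n0
  congr 1
  ext n
  constructor <;> exact fun h h2 => h h2.symm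

lemma DD_self (x : X) : DD d ε t L x x = 0 := by
  unfold DD; rw [if_pos rfl]

include hmet in
lemma DD_symm (x y : X) : DD d ε t L x y = DD d ε t L y x := by
  unfold DD
  rcases eq_or_ne x y with h | h
  · subst h; rfl
  · rw [if_neg h, if_neg h.symm, hmet.2.1 x y, n0_symm]

include htpos hεpos in
lemma DD_pos {x y : X} (hxy : x ≠ y) : 0 < DD d ε t L x y := by
  unfold DD
  rw [if_neg hxy]
  split
  · exact htpos _
  · exact lt_trans hεpos (not_le.mp (by assumption))

include htpos hεpos in
lemma DD_eq_zero_iff (x y : X) : DD d ε t L x y = 0 ↔ x = y := by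
  constructor
  · intro h
    by_contra hxy
    exact absurd h (ne_of_gt (DD_pos d ε t L hεpos htpos hxy))
  · intro h; subst h; exact DD_self d ε t L x

include hεpos htpos hthalf htε in
lemma DD_le_eps {x y : X} (h : d x y ≤ ε) : DD d ε t L x y ≤ ε := by
  unfold DD
  rcases eq_or_ne x y with hxy | hxy
  · rw [if_pos hxy]; linarith
  · rw [if_neg hxy, if_pos h]
    have h1 : t (n0 d t L x y) ≤ t 0 := (t_anti t htpos hthalf).antitone (Nat.zero_le _)
    have := htpos 0
    linarith

include hmet hεpos in
lemma DD_eq_large {x y : X} (h : ¬ d x y ≤ ε) : DD d ε t L x y = d x y := by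
  have hxy : x ≠ y := by
    intro he; subst he
    exact h (((hmet.1 x x).mpr rfl).le.trans hεpos.le)
  unfold DD
  rw [if_neg hxy, if_neg h]

include hmet in
lemma DD_eq_small {x y : X} (hxy : x ≠ y) (h : d x y ≤ ε) :
    DD d ε t L x y = t (n0 d t L x y) := by
  unfold DD
  rw [if_neg hxy, if_pos h]

include hmet hεpos htpos in
lemma DD_nonneg (x y : X) : 0 ≤ DD d ε t L x y := by
  rcases eq_or_ne x y with rfl | h
  · rw [DD_self]
  · exact (DD_pos d ε t L hεpos htpos h).le

include hmet hεpos htpos hthalf htε hcov in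
lemma DD_ultra (x y z : X) :
    DD d ε t L x y ≤ max (DD d ε t L x z) (DD d ε t L z y) := by
  rcases eq_or_ne x y with rfl | hxy
  · rw [DD_self]
    exact le_max_of_le_left (DD_nonneg d ε t L hmet hεpos htpos x z)
  rcases le_or_gt (d x y) ε with hle | hgt
  · -- small case
    rcases eq_or_ne z x with rfl | hzx
    · exact le_max_right _ _
    rcases eq_or_ne z y with rfl | hzy
    · exact le_max_left _ _
    by_cases hxz : d x z ≤ ε
    · have hzy' : d z y ≤ ε := by
        have h1 : d z y ≤ max (d z x) (d x y) := hmet.2.2 z y x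
        have h2 : d z x = d x z := hmet.2.1 z x
        rw [h2] at h1
        exact h1.trans (max_le hxz hle)
      -- all pairwise small, Cantor argument
      rw [DD_eq_small d ε t L hmet hxy hle, DD_eq_small d ε t L hmet (Ne.symm hzx) hxz,
        DD_eq_small d ε t L hmet hzy hzy']
      set a := n0 d t L x z with ha
      set b := n0 d t L z y with hb
      have hmin : min a b ≤ n0 d t L x y := by
        by_contra hcon
        push_neg at hcon
        have h1 : (x ∈ U d t L (n0 d t L x y) ↔ z ∈ U d t L (n0 d t L x y)) :=
          n0_min d t L (lt_of_lt_of_le hcon (min_le_left a b))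
        have h2 : (z ∈ U d t L (n0 d t L x y) ↔ y ∈ U d t L (n0 d t L x y)) :=
          n0_min d t L (lt_of_lt_of_le hcon (min_le_right a b))
        exact n0_mem d t L hmet htpos hthalf hcov hxy (h1.trans h2)
      have hanti := (t_anti t htpos hthalf).antitone
      calc t (n0 d t L x y) ≤ t (min a b) := hanti hmin
        _ ≤ max (t a) (t b) := by
            rcases min_cases a b with ⟨h1, -⟩ | ⟨h1, -⟩
            · rw [h1]; exact le_max_left _ _
            · rw [h1]; exact le_max_right _ _
    · -- d x z > ε
      have : DD d ε t L x y ≤ ε := DD_le_eps d ε t L hεpos htpos hthalf htε hle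
      refine le_max_of_le_left ?_
      rw [DD_eq_large d ε t L hmet hεpos hxz]
      linarith [not_le.mp hxz]
  · -- large case: DD x y = d x y
    rw [DD_eq_large d ε t L hmet hεpos (not_le.mpr hgt)]
    by_cases hxz : d x z ≤ ε
    · have hzy : ¬ d z y ≤ ε := by
        intro h
        have h1 : d x y ≤ max (d x z) (d z y) := hmet.2.2 x y z
        exact absurd (h1.trans (max_le hxz h)) (not_le.mpr hgt)
      refine le_max_of_le_right ?_
      rw [DD_eq_large d ε t L hmet hεpos hzy]
      have h1 : d x y ≤ max (d x z) (d z y) := hmet.2.2 x y z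
      rcases max_cases (d x z) (d z y) with ⟨h2, -⟩ | ⟨h2, -⟩
      · rw [h2] at h1; linarith
      · rwa [h2] at h1
    · by_cases hzy : d z y ≤ ε
      · refine le_max_of_le_left ?_
        rw [DD_eq_large d ε t L hmet hεpos hxz]
        have h1 : d x y ≤ max (d x z) (d z y) := hmet.2.2 x y z
        rcases max_cases (d x z) (d z y) with ⟨h2, -⟩ | ⟨h2, -⟩
        · rwa [h2] at h1
        · rw [h2] at h1; linarith
      · rw [DD_eq_large d ε t L hmet hεpos hxz, DD_eq_large d ε t L hmet hεpos hzy]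
        exact hmet.2.2 x y z

include hmet in
lemma U_agree {x y : X} (n : ℕ) (h : d x y ≤ t n.unpair.1) :
    x ∈ U d t L n ↔ y ∈ U d t L n := by
  constructor
  · rintro ⟨c, hc, hcx⟩
    refine ⟨c, hc, ?_⟩
    exact (hmet.2.2 c y x).trans (max_le hcx ((hmet.2.1 x y) ▸ h))
  · rintro ⟨c, hc, hcy⟩
    refine ⟨c, hc, ?_⟩
    exact (hmet.2.2 c x y).trans (max_le hcy (by rw [hmet.2.1 y x]; exact h))

include hmet hεpos htpos hthalf htε hcov in
lemma DD_lt_of_d_small (γ : ℝ) (hγ : 0 < γ) (x : X) :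
    ∃ δ > 0, ∀ y, d x y < δ → DD d ε t L x y < γ := by
  obtain ⟨m, hm⟩ := t_small t htpos hthalf γ hγ
  refine ⟨min ε (t m), lt_min hεpos (htpos m), ?_⟩
  intro y hy
  rcases eq_or_ne x y with rfl | hxy
  · rw [DD_self]; exact hγ
  have hyε : d x y ≤ ε := (hy.trans_le (min_le_left _ _)).le
  have hym : d x y ≤ t m := (hy.trans_le (min_le_right _ _)).le
  rw [DD_eq_small d ε t L hmet hxy hyε]
  have hanti := (t_anti t htpos hthalf).antitone
  have hn0 : m ≤ n0 d t L x y := by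
    by_contra hcon
    push_neg at hcon
    apply n0_mem d t L hmet htpos hthalf hcov hxy
    apply U_agree d t L hmet
    calc d x y ≤ t m := hym
      _ ≤ t (n0 d t L x y) := hanti hcon.le
      _ ≤ t ((n0 d t L x y).unpair.1) := hanti (Nat.unpair_left_le _)
  calc t (n0 d t L x y) ≤ t m := hanti hn0
    _ < γ := hm

include hmet hεpos htpos hthalf htε hcov in
lemma d_lt_of_DD_small (δ : ℝ) (hδ : 0 < δ) (x : X) :
    ∃ γ > 0, ∀ y, DD d ε t L x y < γ → d x y < δ := by
  obtain ⟨k, hk⟩ := t_small t htpos hthalf δ hδ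
  obtain ⟨n, -, hxU, hsep⟩ := center_sep d t L hmet hcov k x
  refine ⟨min (t n) ε, lt_min (htpos n) hεpos, ?_⟩
  intro y hD
  by_contra hcon
  push_neg at hcon
  have hxy : x ≠ y := by
    intro rfl'; subst rfl'
    rw [(hmet.1 x x).mpr rfl] at hcon; linarith
  have hdk : t k < d x y := lt_of_lt_of_le hk hcon
  by_cases hyε : d x y ≤ ε
  · rw [DD_eq_small d ε t L hmet hxy hyε] at hD
    have hnmem : n ∈ {n | ¬ (x ∈ U d t L n ↔ y ∈ U d t L n)} := by
      intro h
      exact hsep y hdk (h.mp hxU)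
    have hle : n0 d t L x y ≤ n := Nat.sInf_le hnmem
    have := (t_anti t htpos hthalf).antitone hle
    have := min_le_left (t n) ε
    linarith
  · rw [DD_eq_large d ε t L hmet hεpos hyε] at hD
    have := min_le_right (t n) ε
    have := not_le.mp hyε
    linarith

include hmet hεpos htpos hthalf htε hcov in
lemma DD_gen {_i : TopologicalSpace X} (hgen : GeneratesTopology d) :
    GeneratesTopology (DD d ε t L) := by
  intro s
  rw [hgen s]
  constructor
  · intro h x hx
    obtain ⟨δ, hδ, hball⟩ := h x hx
    obtain ⟨γ, hγ, himp⟩ := d_lt_of_DD_small d ε t L hmet hεpos htpos hthalf htε hcov δ hδ x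
    exact ⟨γ, hγ, fun y hy => hball y (himp y hy)⟩
  · intro h x hx
    obtain ⟨γ, hγ, hball⟩ := h x hx
    obtain ⟨δ, hδ, himp⟩ := DD_lt_of_d_small d ε t L hmet hεpos htpos hthalf htε hcov γ hγ x
    exact ⟨δ, hδ, fun y hy => hball y (himp y hy)⟩

omit hmet hεpos htpos hthalf htε hcov in
lemma diam_spec (ρ : X → X → ℝ) (F : Finset X) (hF : F.Nonempty) :
    (∃ x ∈ F, ∃ y ∈ F, ρ x y = sSup {r : ℝ | ∃ x ∈ F, ∃ y ∈ F, ρ x y = r}) ∧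
      ∀ x ∈ F, ∀ y ∈ F, ρ x y ≤ sSup {r : ℝ | ∃ x ∈ F, ∃ y ∈ F, ρ x y = r} := by
  have hfin : {r : ℝ | ∃ x ∈ F, ∃ y ∈ F, ρ x y = r}.Finite := by
    apply Set.Finite.subset (Set.Finite.image2 ρ F.finite_toSet F.finite_toSet)
    rintro r ⟨x, hx, y, hy, hxy⟩
    exact ⟨x, hx, y, hy, hxy⟩
  obtain ⟨x0, hx0⟩ := hF
  have hne : {r : ℝ | ∃ x ∈ F, ∃ y ∈ F, ρ x y = r}.Nonempty := ⟨ρ x0 x0, x0, hx0, x0, hx0, rfl⟩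
  constructor
  · obtain ⟨x, hx, y, hy, hxy⟩ := hne.csSup_mem hfin
    exact ⟨x, hx, y, hy, hxy⟩
  · intro x hx y hy
    exact le_csSup hfin.bddAbove ⟨x, hx, y, hy, rfl⟩

omit hmet hεpos htpos hthalf htε hcov in
lemma alpha_spec (ρ : X → X → ℝ) (F : Finset X) (hF : 2 ≤ F.card) :
    (∃ x ∈ F, ∃ y ∈ F, x ≠ y ∧
        ρ x y = sInf {r : ℝ | ∃ x ∈ F, ∃ y ∈ F, x ≠ y ∧ ρ x y = r}) ∧
      ∀ x ∈ F, ∀ y ∈ F, x ≠ y →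
        sInf {r : ℝ | ∃ x ∈ F, ∃ y ∈ F, x ≠ y ∧ ρ x y = r} ≤ ρ x y := by
  have hfin : {r : ℝ | ∃ x ∈ F, ∃ y ∈ F, x ≠ y ∧ ρ x y = r}.Finite := by
    apply Set.Finite.subset (Set.Finite.image2 ρ F.finite_toSet F.finite_toSet)
    rintro r ⟨x, hx, y, hy, -, hxy⟩
    exact ⟨x, hx, y, hy, hxy⟩
  obtain ⟨x0, hx0, y0, hy0, hne0⟩ := Finset.one_lt_card.mp hF
  have hne : {r : ℝ | ∃ x ∈ F, ∃ y ∈ F, x ≠ y ∧ ρ x y = r}.Nonempty :=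
    ⟨ρ x0 y0, x0, hx0, y0, hy0, hne0, rfl⟩
  constructor
  · obtain ⟨x, hx, y, hy, hxy, h⟩ := hne.csInf_mem hfin
    exact ⟨x, hx, y, hy, hxy, h⟩
  · intro x hx y hy hxy
    exact csInf_le hfin.bddBelow ⟨x, hx, y, hy, hxy, rfl⟩

/-- The index of the `ε`-class of a point. -/
noncomputable def cls (x : X) : ℕ :=
  sInf {i | ∃ c, (L 0)[i]? = some c ∧ d c x ≤ ε}

include htpos htε hcov in
lemma cls_mem (x : X) :
    ∃ c, (L 0)[cls d ε L x]? = some c ∧ d c x ≤ ε := by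
  apply Nat.sInf_mem (s := {i | ∃ c, (L 0)[i]? = some c ∧ d c x ≤ ε})
  obtain ⟨c, hcL, hdc⟩ := hcov 0 x
  obtain ⟨i, hi⟩ := List.get_of_mem hcL
  refine ⟨i.1, c, ?_, ?_⟩
  · rw [List.getElem?_eq_getElem i.2]; exact congrArg some hi
  · have h0 := htpos 0
    linarith

include htpos htε hcov in
lemma cls_lt (x : X) : cls d ε L x < (L 0).length := by
  obtain ⟨c, hc, -⟩ := cls_mem d ε t L htpos htε hcov x
  exact List.getElem?_eq_some_iff.mp hc |>.1

include hmet in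
lemma cls_congr {x y : X} (h : d x y ≤ ε) : cls d ε L x = cls d ε L y := by
  unfold cls
  congr 1
  ext i
  constructor
  · rintro ⟨c, hc, hcx⟩
    exact ⟨c, hc, (hmet.2.2 c y x).trans (max_le hcx (hmet.2.1 x y ▸ h))⟩
  · rintro ⟨c, hc, hcy⟩
    refine ⟨c, hc, (hmet.2.2 c x y).trans (max_le hcy ?_)⟩
    rw [hmet.2.1 y x]; exact h

include hmet htpos htε hcov in
lemma cls_eq_imp {x y : X} (h : cls d ε L x = cls d ε L y) : d x y ≤ ε := by
  obtain ⟨c, hc, hcx⟩ := cls_mem d ε t L htpos htε hcov x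
  obtain ⟨c', hc', hcy⟩ := cls_mem d ε t L htpos htε hcov y
  rw [h, hc'] at hc
  have hcc : c' = c := by injection hc
  rw [hcc] at hcy
  exact (hmet.2.2 x y c).trans (max_le (hmet.2.1 c x ▸ hcx) hcy)

include hmet hεpos htpos hthalf htε hcov in
lemma DD_doubling (F : Finset X) (hF : 2 ≤ F.card) :
    (F.card : ℝ) ≤ (((L 0).length : ℝ) + 2) *
      (sSup {r : ℝ | ∃ x ∈ F, ∃ y ∈ F, DD d ε t L x y = r} /
       sInf {r : ℝ | ∃ x ∈ F, ∃ y ∈ F, x ≠ y ∧ DD d ε t L x y = r}) := by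
  classical
  set ρ := DD d ε t L with hρ
  set α := sInf {r : ℝ | ∃ x ∈ F, ∃ y ∈ F, x ≠ y ∧ ρ x y = r} with hα
  set δ := sSup {r : ℝ | ∃ x ∈ F, ∃ y ∈ F, ρ x y = r} with hδ
  obtain ⟨hdiam_att, hdiam_ub⟩ := diam_spec ρ F (Finset.card_pos.mp (by omega))
  obtain ⟨⟨p, hp, q, hq, hpq, hpqα⟩, halpha_lb⟩ := alpha_spec ρ F hF
  rw [← hα] at hpqα
  rw [← hδ] at hdiam_att
  have halpha_lb' : ∀ x ∈ F, ∀ y ∈ F, x ≠ y → α ≤ ρ x y := by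
    intro x hx y hy hxy
    rw [hα]
    exact halpha_lb x hx y hy hxy
  have hdiam_ub' : ∀ x ∈ F, ∀ y ∈ F, ρ x y ≤ δ := by
    intro x hx y hy
    rw [hδ]
    exact hdiam_ub x hx y hy
  have hαpos : 0 < α := by
    rw [← hpqα]
    exact DD_pos d ε t L hεpos htpos hpq
  have hαδ : α ≤ δ := hpqα ▸ hdiam_ub' p hp q hq
  have hanti := (t_anti t htpos hthalf).antitone
  obtain ⟨k, hk, hkmin⟩ : ∃ k, t k < α ∧ ∀ j, j < k → α ≤ t j := by
    have hne : {k | t k < α}.Nonempty := t_small t htpos hthalf α hαpos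
    exact ⟨sInf {k | t k < α}, Nat.sInf_mem hne,
      fun j hj => not_lt.mp (Nat.notMem_of_lt_sInf hj)⟩
  have hn0lt : ∀ x ∈ F, ∀ y ∈ F, x ≠ y → d x y ≤ ε → n0 d t L x y < k := by
    intro x hx y hy hxy hde
    by_contra hcon
    push_neg at hcon
    have h1 : t (n0 d t L x y) ≤ t k := hanti hcon
    have h2 : α ≤ ρ x y := halpha_lb' x hx y hy hxy
    rw [hρ, DD_eq_small d ε t L hmet hxy hde] at h2
    linarith
  have hδαdiv : (0:ℝ) < δ / α := div_pos (lt_of_lt_of_le hαpos hαδ) hαpos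
  have hlen0 : (0:ℝ) ≤ ((L 0).length : ℝ) := Nat.cast_nonneg _
  by_cases hsmall : ∀ x ∈ F, ∀ y ∈ F, d x y ≤ ε
  · -- Case: all points in a single ε-class.
    have hk0 : k ≠ 0 := by
      intro h
      have h2 : α ≤ ρ p q := halpha_lb' p hp q hq hpq
      rw [hρ, DD_eq_small d ε t L hmet hpq (hsmall p hp q hq)] at h2
      have h3 : t (n0 d t L p q) ≤ t 0 := hanti (Nat.zero_le _)
      rw [h] at hk
      linarith
    obtain ⟨u, hu, v, hv, huv⟩ := hdiam_att
    have huvne : u ≠ v := by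
      intro h
      subst h
      have h0 : ρ u u = 0 := DD_self d ε t L u
      rw [huv] at h0
      linarith
    set j := n0 d t L u v with hjdef
    have hδj : δ = t j := by
      rw [← huv, hρ, DD_eq_small d ε t L hmet huvne (hsmall u hu v hv)]
    have hjk : j < k := hn0lt u hu v hv huvne (hsmall u hu v hv)
    have hn0ge : ∀ x ∈ F, ∀ y ∈ F, x ≠ y → j ≤ n0 d t L x y := by
      intro x hx y hy hxy
      by_contra hcon
      push_neg at hcon
      have h1 : t j < t (n0 d t L x y) := t_anti t htpos hthalf hcon
      have h2 : ρ x y ≤ δ := hdiam_ub' x hx y hy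
      rw [hρ, DD_eq_small d ε t L hmet hxy (hsmall x hx y hy)] at h2
      rw [hδj] at h2
      linarith
    have hcard : F.card ≤ 2 ^ (k - j) := by
      have hinj : Set.InjOn
          (fun x => fun i : Fin (k - j) => decide (x ∈ U d t L (j + i.1))) F := by
        intro x hx y hy hfeq
        by_contra hxy
        have hn0mem := n0_mem d t L hmet htpos hthalf hcov hxy
        have h1 : j ≤ n0 d t L x y := hn0ge x hx y hy hxy
        have h2 : n0 d t L x y < k := hn0lt x hx y hy hxy (hsmall x hx y hy)
        have hi : n0 d t L x y - j < k - j := by omega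
        have hcf := congrFun hfeq ⟨n0 d t L x y - j, hi⟩
        simp only at hcf
        rw [(by omega : j + (n0 d t L x y - j) = n0 d t L x y)] at hcf
        exact hn0mem (decide_eq_decide.mp hcf)
      calc F.card ≤ (Finset.univ : Finset (Fin (k - j) → Bool)).card :=
            Finset.card_le_card_of_injOn _ (fun a _ => Finset.mem_univ _) hinj
        _ = 2 ^ (k - j) := by simp
    obtain ⟨K, rfl⟩ := Nat.exists_eq_succ_of_ne_zero hk0
    have hjK : j ≤ K := by omega
    have hαK : α ≤ t K := hkmin K (Nat.lt_succ_self K)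
    have hpow : t (j + (K - j)) * 2 ^ (K - j) ≤ t j := t_pow_le t htpos hthalf j (K - j)
    rw [(by omega : j + (K - j) = K)] at hpow
    have hpowpos : (0:ℝ) < 2 ^ (K - j) := by positivity
    have hδα : (2:ℝ) ^ (K - j) ≤ δ / α := by
      rw [le_div_iff₀ hαpos, hδj]
      nlinarith
    have hc2 : (F.card : ℝ) ≤ 2 * 2 ^ (K - j) := by
      have : ((2:ℕ) ^ (K + 1 - j) : ℝ) = 2 * 2 ^ (K - j) := by
        rw [(by omega : K + 1 - j = (K - j) + 1)]
        push_cast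
        ring
      calc (F.card : ℝ) ≤ ((2:ℕ) ^ (K + 1 - j) : ℝ) := by exact_mod_cast hcard
        _ = 2 * 2 ^ (K - j) := this
    calc (F.card : ℝ) ≤ 2 * 2 ^ (K - j) := hc2
      _ ≤ 2 * (δ / α) := by linarith
      _ ≤ (((L 0).length : ℝ) + 2) * (δ / α) := by nlinarith
  · -- Case: at least two ε-classes meet F.
    push_neg at hsmall
    obtain ⟨u, hu, v, hv, huv⟩ := hsmall
    have hδε : ε < δ := by
      have h1 : ρ u v ≤ δ := hdiam_ub' u hu v hv
      rw [hρ, DD_eq_large d ε t L hmet hεpos (not_le.mpr huv)] at h1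
      linarith [huv]
    have hcard : F.card ≤ (L 0).length * 2 ^ k := by
      have hinj : Set.InjOn
          (fun x => (cls d ε L x, fun i : Fin k => decide (x ∈ U d t L i.1))) F := by
        intro x hx y hy hfeq
        by_contra hxy
        have hclseq : cls d ε L x = cls d ε L y := congrArg Prod.fst hfeq
        have hde : d x y ≤ ε := cls_eq_imp d ε t L hmet htpos htε hcov hclseq
        have hn0mem := n0_mem d t L hmet htpos hthalf hcov hxy
        have h2 : n0 d t L x y < k := hn0lt x hx y hy hxy hde
        have hcf := congrFun (congrArg Prod.snd hfeq) ⟨n0 d t L x y, h2⟩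
        simp only at hcf
        exact hn0mem (decide_eq_decide.mp hcf)
      have hmaps : ∀ a ∈ F, (cls d ε L a, fun i : Fin k => decide (a ∈ U d t L i.1)) ∈
          (Finset.range (L 0).length) ×ˢ (Finset.univ : Finset (Fin k → Bool)) := by
        intro a _
        rw [Finset.mem_product]
        exact ⟨Finset.mem_range.mpr (cls_lt d ε t L htpos htε hcov a), Finset.mem_univ _⟩
      calc F.card ≤ ((Finset.range (L 0).length) ×ˢ
            (Finset.univ : Finset (Fin k → Bool))).card :=
            Finset.card_le_card_of_injOn _ hmaps hinj
        _ = (L 0).length * 2 ^ k := by simp [Finset.card_product]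
    have h2k : (2:ℝ) ^ k * α ≤ δ := by
      rcases Nat.eq_zero_or_pos k with hk0 | hk0
      · subst hk0
        simpa using hαδ
      · obtain ⟨K, rfl⟩ := Nat.exists_eq_succ_of_ne_zero (Nat.pos_iff_ne_zero.mp hk0)
        have hαK : α ≤ t K := hkmin K (Nat.lt_succ_self K)
        have hpow : t (0 + K) * 2 ^ K ≤ t 0 := t_pow_le t htpos hthalf 0 K
        rw [zero_add] at hpow
        have hpowpos : (0:ℝ) < 2 ^ K := by positivity
        have : (2:ℝ) ^ (K + 1) = 2 * 2 ^ K := by ring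
        rw [this]
        nlinarith
    have hδαk : (2:ℝ) ^ k ≤ δ / α := by
      rw [le_div_iff₀ hαpos]
      linarith
    have hc2 : (F.card : ℝ) ≤ ((L 0).length : ℝ) * 2 ^ k := by
      have : (((L 0).length * 2 ^ k : ℕ) : ℝ) = ((L 0).length : ℝ) * 2 ^ k := by
        push_cast
        ring
      calc (F.card : ℝ) ≤ (((L 0).length * 2 ^ k : ℕ) : ℝ) := by exact_mod_cast hcard
        _ = ((L 0).length : ℝ) * 2 ^ k := this
    have hpk : (0:ℝ) < 2 ^ k := by positivity
    calc (F.card : ℝ) ≤ ((L 0).length : ℝ) * 2 ^ k := hc2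
      _ ≤ ((L 0).length : ℝ) * (δ / α) := by nlinarith
      _ ≤ (((L 0).length : ℝ) + 2) * (δ / α) := by nlinarith

end
end DDenseAux

/-- On a compact ultrametrizable space, for a range set `S` with countable
coinitiality, every `d ∈ Ult(X,S)` can be approximated within any `ε > 0` of `S` by a
doubling `D ∈ Ult(X,S)`; hence doubling ultrametrics are dense in
`(Ult(X,S), 𝒰𝒟_X^S)`. -/
theorem dense_doubling_ultrametrics_of_compact {X : Type*} [TopologicalSpace X]
    [CompactSpace X]
    (S : Set ℝ) (hSsub : S ⊆ Set.Ici 0) (hS0 : (0 : ℝ) ∈ S)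
    (hco : ∃ s : ℕ → ℝ, StrictAnti s ∧ (∀ n, s n ∈ S) ∧ Tendsto s atTop (nhds 0))
    (hultra : ∃ ρ : X → X → ℝ, IsUltrametricOn ρ ∧ GeneratesTopology ρ) :
    ∀ d : X → X → ℝ, MemUlt S d → ∀ ε : ℝ, ε ∈ S → 0 < ε →
      ∃ D : X → X → ℝ, MemUlt S D ∧ Doubling D ∧
        UDdist S D d ≤ ENNReal.ofReal ε := by
  intro d hd ε hεS hεpos
  classical
  obtain ⟨s, hsanti, hsS, hs0⟩ := hco
  obtain ⟨hmet, hdS, hgen⟩ := hd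
  have hspos : ∀ n, 0 < s n := by
    intro n
    have h1 : s (n+1) < s n := hsanti (Nat.lt_succ_self n)
    have h2 : 0 ≤ s (n+1) := hSsub (hsS (n+1))
    linarith
  have hkey : ∀ c : ℝ, 0 < c → ∃ n, s n ≤ c := by
    intro c hc
    obtain ⟨n, hn⟩ := (hs0.eventually (gt_mem_nhds hc)).exists
    exact ⟨n, hn.le⟩
  let f : ℝ → ℕ := fun c => if h : 0 < c then (hkey c h).choose else 0
  have hf : ∀ c, (h : 0 < c) → s (f c) ≤ c := by
    intro c hc
    simp only [f, dif_pos hc]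
    exact (hkey c hc).choose_spec
  let N : ℕ → ℕ := fun k => Nat.rec (f (ε/2)) (fun _ nk => f (s nk / 2)) k
  let t : ℕ → ℝ := fun k => s (N k)
  have htpos : ∀ k, 0 < t k := fun k => hspos _
  have htS : ∀ k, t k ∈ S := fun k => hsS _
  have htε : 2 * t 0 ≤ ε := by
    have h1 := hf (ε/2) (by linarith)
    have h2 : t 0 = s (f (ε/2)) := rfl
    rw [h2]
    linarith
  have hthalf : ∀ k, 2 * t (k+1) ≤ t k := by
    intro k
    have h1 : 0 < s (N k) / 2 := by
      have := hspos (N k); linarith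
    have h2 := hf (s (N k) / 2) h1
    have h3 : t (k+1) = s (f (s (N k) / 2)) := rfl
    have h4 : t k = s (N k) := rfl
    rw [h3, h4]
    linarith
  have hnet : ∀ k, ∃ l : List X, ∀ x, ∃ c ∈ l, d c x ≤ t k := by
    intro k
    set r := t k with hr
    have hrpos : 0 < r := htpos k
    have hopen : ∀ c : X, IsOpen {y | d c y < r} := by
      intro c
      rw [hgen]
      intro x hx
      refine ⟨r, hrpos, ?_⟩
      intro y hy
      exact lt_of_le_of_lt (hmet.2.2 c y x) (max_lt hx hy)
    have hcover : (Set.univ : Set X) ⊆ ⋃ c : X, {y | d c y < r} := by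
      intro x _
      exact Set.mem_iUnion.mpr ⟨x, by simp [(hmet.1 x x).mpr rfl, hrpos]⟩
    obtain ⟨T, hT⟩ := isCompact_univ.elim_finite_subcover _ hopen hcover
    refine ⟨T.toList, ?_⟩
    intro x
    obtain ⟨c, hc, hcx⟩ := Set.mem_iUnion₂.mp (hT (Set.mem_univ x))
    exact ⟨c, Finset.mem_toList.mpr hc, le_of_lt hcx⟩
  choose L hcov using hnet
  refine ⟨DDenseAux.DD d ε t L, ⟨⟨?_, ?_, ?_⟩, ?_, ?_⟩, ?_, ?_⟩
  · exact DDenseAux.DD_eq_zero_iff d ε t L hεpos htpos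
  · exact DDenseAux.DD_symm d ε t L hmet
  · exact DDenseAux.DD_ultra d ε t L hmet hεpos htpos hthalf htε hcov
  · -- values in S
    intro x y
    rcases eq_or_ne x y with rfl | hxy
    · rw [DDenseAux.DD_self]
      exact hS0
    · by_cases h : d x y ≤ ε
      · rw [DDenseAux.DD_eq_small d ε t L hmet hxy h]
        exact htS _
      · rw [DDenseAux.DD_eq_large d ε t L hmet hεpos h]
        exact hdS x y
  · exact DDenseAux.DD_gen d ε t L hmet hεpos htpos hthalf htε hcov hgen
  · -- Doubling
    refine ⟨((L 0).length : ℝ) + 2,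
      by have h : (0:ℝ) ≤ ((L 0).length : ℝ) := Nat.cast_nonneg _; linarith,
      1, one_pos, ?_⟩
    intro F hF
    have h := DDenseAux.DD_doubling d ε t L hmet hεpos htpos hthalf htε hcov F hF
    rw [Real.rpow_one]
    exact h
  · -- UDdist
    apply sInf_le
    refine Set.mem_union_right _ ⟨ε, ⟨hεS, ?_⟩, rfl⟩
    intro x y
    constructor
    · rcases eq_or_ne x y with rfl | hxy
      · rw [DDenseAux.DD_self]
        exact le_max_of_le_right hεpos.le
      · by_cases h : d x y ≤ ε
        · exact le_max_of_le_right
            (DDenseAux.DD_le_eps d ε t L hεpos htpos hthalf htε h)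
        · rw [DDenseAux.DD_eq_large d ε t L hmet hεpos h]
          exact le_max_left _ _
    · by_cases h : d x y ≤ ε
      · exact le_max_of_le_right h
      · rw [DDenseAux.DD_eq_large d ε t L hmet hεpos h]
        exact le_max_left _ _
end
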